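/- arXiv:2506.03369 — 8 statements merged into one kernel-verified Lean document; each statement's English description precedes it below -/
import Mathlib

section
/- Let X be a nonnegative random variable with finite mean whose distribution has a Pareto tail with parameters (c, α), i.e., lim_{x→∞} P(X > x)/(c/x)^α = 1, where c > 0 and α > 1. Let X_{(n:n)} denote the maximum of n i.i.d. copies of X. Then lim_{n→∞} E[X_{(n:n)}] / (c · Γ(1 − 1/α) · n^{1/α}) = 1. -/
open MeasureTheory ProbabilityTheory Filter Topology

section AuxLemmas
open Set Real

lemma aux_exp_int {a : ℝ} (ha : 0 ≤ a) :
    ∫ u in Set.Ioo (0:ℝ) a, Real.exp (-u) = 1 - Real.exp (-a) := by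
  rw [← integral_Ioc_eq_integral_Ioo, ← intervalIntegral.integral_of_le ha,
    intervalIntegral.integral_comp_neg (fun x => Real.exp x), integral_exp]
  simp

lemma aux_gamma_lintegral {α : ℝ} (hα : 1 < α) :
    ∫⁻ s in Set.Ioi (0:ℝ), ENNReal.ofReal (1 - Real.exp (-s ^ (-α)))
      = ENNReal.ofReal (Real.Gamma (1 - 1/α)) := by
  have hα0 : (0:ℝ) < α := by linarith
  have h1α : (0:ℝ) < 1 - 1/α := by
    have : 1/α < 1 := by rw [div_lt_one hα0]; exact hα
    linarith
  set S : Set (ℝ × ℝ) := {p : ℝ × ℝ | 0 < p.1 ∧ 0 < p.2 ∧ p.2 < p.1 ^ (-α)} with hS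
  have hSmeas : MeasurableSet S := by
    apply MeasurableSet.inter (measurableSet_lt measurable_const measurable_fst)
    exact MeasurableSet.inter (measurableSet_lt measurable_const measurable_snd)
      (measurableSet_lt measurable_snd (measurable_fst.pow_const _))
  set F : ℝ → ℝ → ENNReal :=
    fun s u => S.indicator (fun p => ENNReal.ofReal (Real.exp (-p.2))) (s, u) with hF
  have hFmeas : Measurable (Function.uncurry F) :=
    (Measurable.indicator ((measurable_snd.neg.exp).ennreal_ofReal) hSmeas)
  have hinner : ∀ s : ℝ, (∫⁻ u, F s u)
      = (Set.Ioi (0:ℝ)).indicator (fun s => ENNReal.ofReal (1 - Real.exp (-s ^ (-α)))) s := by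
    intro s
    by_cases hs : 0 < s
    · have hpos : 0 < s ^ (-α) := Real.rpow_pos_of_pos hs _
      have key : ∀ u : ℝ, F s u
          = (Set.Ioo (0:ℝ) (s ^ (-α))).indicator (fun u => ENNReal.ofReal (Real.exp (-u))) u := by
        intro u
        simp only [hF, Set.indicator, hS, Set.mem_setOf_eq, Set.mem_Ioo, hs, true_and]
      rw [lintegral_congr key, lintegral_indicator measurableSet_Ioo,
        ← ofReal_integral_eq_lintegral_ofReal]
      · rw [aux_exp_int hpos.le, Set.indicator_of_mem (Set.mem_Ioi.mpr hs)]
      · exact ((continuous_exp.comp continuous_neg).integrableOn_Icc).mono_set Set.Ioo_subset_Icc_self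
      · exact Filter.Eventually.of_forall (fun u => (Real.exp_pos _).le)
    · have key : ∀ u : ℝ, F s u = 0 := by
        intro u
        simp only [hF, Set.indicator, hS, Set.mem_setOf_eq, hs, false_and, if_false]
      rw [lintegral_congr key, lintegral_const, zero_mul, Set.indicator_of_notMem (by simpa using hs)]
  have houter : ∀ u : ℝ, (∫⁻ s, F s u)
      = (Set.Ioi (0:ℝ)).indicator
          (fun u => ENNReal.ofReal (Real.exp (-u) * u ^ (-(1/α)))) u := by
    intro u
    by_cases hu : 0 < u
    · have key : ∀ s : ℝ, F s u
          = (Set.Ioo (0:ℝ) (u ^ (-(1/α)))).indicator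
              (fun _ => ENNReal.ofReal (Real.exp (-u))) s := by
        intro s
        simp only [hF, Set.indicator, hS, Set.mem_setOf_eq, Set.mem_Ioo]
        refine if_congr ?_ rfl rfl
        constructor
        · rintro ⟨hs, _, hlt⟩
          refine ⟨hs, ?_⟩
          have := (Real.lt_rpow_inv_iff_of_neg hs hu (by linarith : -α < 0)).2 hlt
          rwa [show (-α)⁻¹ = -(1/α) by field_simp] at this
        · rintro ⟨hs, hlt⟩
          refine ⟨hs, hu, ?_⟩
          rw [show -(1/α) = (-α)⁻¹ by field_simp] at hlt
          exact (Real.lt_rpow_inv_iff_of_neg hs hu (by linarith : -α < 0)).1 hlt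
      rw [lintegral_congr key, lintegral_indicator measurableSet_Ioo, setLIntegral_const,
        Real.volume_Ioo, Set.indicator_of_mem (Set.mem_Ioi.mpr hu), sub_zero,
        ← ENNReal.ofReal_mul (Real.exp_pos _).le]
    · have key : ∀ s : ℝ, F s u = 0 := by
        intro s
        simp only [hF, Set.indicator, hS, Set.mem_setOf_eq, hu, false_and, and_false, if_false]
      rw [lintegral_congr key, lintegral_const, zero_mul, Set.indicator_of_notMem (by simpa using hu)]
  calc ∫⁻ s in Set.Ioi (0:ℝ), ENNReal.ofReal (1 - Real.exp (-s ^ (-α)))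
      = ∫⁻ s, (Set.Ioi (0:ℝ)).indicator
          (fun s => ENNReal.ofReal (1 - Real.exp (-s ^ (-α)))) s :=
        (lintegral_indicator measurableSet_Ioi _).symm
    _ = ∫⁻ s, ∫⁻ u, F s u := (lintegral_congr hinner).symm
    _ = ∫⁻ u, ∫⁻ s, F s u := lintegral_lintegral_swap hFmeas.aemeasurable
    _ = ∫⁻ u, (Set.Ioi (0:ℝ)).indicator
          (fun u => ENNReal.ofReal (Real.exp (-u) * u ^ (-(1/α)))) u :=
        lintegral_congr houter
    _ = ∫⁻ u in Set.Ioi (0:ℝ), ENNReal.ofReal (Real.exp (-u) * u ^ (-(1/α))) :=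
        lintegral_indicator measurableSet_Ioi _
    _ = ENNReal.ofReal (Real.Gamma (1 - 1/α)) := by
        have hint := Real.GammaIntegral_convergent h1α
        rw [show (1 - 1/α - 1 : ℝ) = -(1/α) by ring] at hint
        rw [Real.Gamma_eq_integral h1α, show (1 - 1/α - 1 : ℝ) = -(1/α) by ring,
          ofReal_integral_eq_lintegral_ofReal hint]
        filter_upwards [ae_restrict_mem measurableSet_Ioi] with x hx
        have hx0 : (0:ℝ) < x := hx
        positivity

lemma aux_gamma_integral {α : ℝ} (hα : 1 < α) :
    ∫ s in Set.Ioi (0:ℝ), (1 - Real.exp (-s ^ (-α))) = Real.Gamma (1 - 1/α) := by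
  have hα0 : (0:ℝ) < α := by linarith
  have h1α : (0:ℝ) < 1 - 1/α := by
    have : 1/α < 1 := by rw [div_lt_one hα0]; exact hα
    linarith
  rw [integral_eq_lintegral_of_nonneg_ae]
  · rw [aux_gamma_lintegral hα, ENNReal.toReal_ofReal (Real.Gamma_pos_of_pos h1α).le]
  · filter_upwards [ae_restrict_mem measurableSet_Ioi] with x hx
    have h1 : 0 < x ^ (-α) := Real.rpow_pos_of_pos hx _
    have := Real.exp_lt_one_iff.mpr (neg_lt_zero.mpr h1)
    simp only [Pi.zero_apply]
    linarith
  · exact (((measurable_id.pow_const (-α)).neg.exp.const_sub 1)).aestronglyMeasurable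

lemma aux_pow_lim {u : ℕ → ℝ} {L : ℝ}
    (h_pos : ∀ᶠ n in atTop, 0 < u n)
    (h_lim : Tendsto (fun n : ℕ => (n : ℝ) * u n) atTop (𝓝 L)) :
    Tendsto (fun n => (1 - u n) ^ n) atTop (𝓝 (Real.exp (-L))) := by
  have hu0 : Tendsto u atTop (𝓝 0) := by
    have h1 : Tendsto (fun n : ℕ => ((n : ℝ) * u n) * (n : ℝ)⁻¹) atTop (𝓝 (L * 0)) :=
      h_lim.mul ((tendsto_inv_atTop_zero : Tendsto (fun x:ℝ => x⁻¹) atTop (𝓝 0)).comp tendsto_natCast_atTop_atTop)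
    rw [mul_zero] at h1
    apply h1.congr'
    filter_upwards [eventually_ge_atTop 1] with n hn
    have hn0 : (n : ℝ) ≠ 0 := Nat.cast_ne_zero.mpr (by omega)
    field_simp
  have hu_small : ∀ᶠ n in atTop, u n < 1/2 := by
    have := hu0.eventually (eventually_lt_nhds (by norm_num : (0:ℝ) < 1/2))
    exact this
  have hslope : Tendsto (fun y : ℝ => Real.log y / (y - 1)) (𝓝[≠] 1) (𝓝 1) := by
    have h := (Real.hasDerivAt_log one_ne_zero)
    rw [hasDerivAt_iff_tendsto_slope] at h
    simp only [inv_one] at h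
    apply h.congr'
    filter_upwards [self_mem_nhdsWithin] with y hy
    simp [slope_def_field, Real.log_one]
  have hy1 : Tendsto (fun n : ℕ => 1 - u n) atTop (𝓝[≠] 1) := by
    apply tendsto_nhdsWithin_of_tendsto_nhds_of_eventually_within
    · simpa using (tendsto_const_nhds.sub hu0)
    · filter_upwards [h_pos] with n hn
      simp only [Set.mem_compl_iff, Set.mem_singleton_iff]
      intro h
      nlinarith
  have hr : Tendsto (fun n : ℕ => Real.log (1 - u n) / ((1 - u n) - 1)) atTop (𝓝 1) :=
    hslope.comp hy1
  have hlog : Tendsto (fun n : ℕ => (n : ℝ) * Real.log (1 - u n)) atTop (𝓝 (-L)) := by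
    have h2 : Tendsto (fun n : ℕ => ((n : ℝ) * u n) *
        -(Real.log (1 - u n) / ((1 - u n) - 1))) atTop (𝓝 (L * -1)) :=
      h_lim.mul hr.neg
    rw [mul_neg_one] at h2
    apply h2.congr'
    filter_upwards [h_pos] with n hn
    have : (1 - u n) - 1 = -(u n) := by ring
    rw [this]
    field_simp
  have hexp : Tendsto (fun n : ℕ => Real.exp ((n : ℝ) * Real.log (1 - u n))) atTop
      (𝓝 (Real.exp (-L))) := (Real.continuous_exp.tendsto _).comp hlog
  apply hexp.congr'
  filter_upwards [h_pos, hu_small] with n hn hn2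
  have hpos : 0 < 1 - u n := by linarith
  rw [← Real.log_pow, Real.exp_log (pow_pos hpos n)]

end AuxLemmas

/-- If `X` is a nonnegative random variable with finite mean whose
distribution has a Pareto tail with parameters `(c, α)`, and `X_{(n:n)}` denotes the
maximum of `n` i.i.d. copies of `X`, then
`E[X_{(n:n)}] / (c · Γ(1 − 1/α) · n^{1/α}) → 1` as `n → ∞`. -/
theorem expected_maximum_pareto_tail
    {Ω : Type*} [MeasureSpace Ω] [IsProbabilityMeasure (ℙ : Measure Ω)]
    (c α : ℝ) (hc : 0 < c) (hα : 1 < α)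
    (X : ℕ → Ω → ℝ) (hmeas : ∀ i, Measurable (X i))
    (hnonneg : ∀ i ω, 0 ≤ X i ω)
    (hint : Integrable (X 0) ℙ)
    (hindep : iIndepFun X ℙ)
    (hident : ∀ i, IdentDistrib (X i) (X 0) ℙ ℙ)
    (htail : Tendsto (fun x : ℝ => (ℙ {ω | X 0 ω > x}).toReal / (c / x) ^ α)
      atTop (𝓝 1)) :
    Tendsto (fun n : ℕ =>
        (∫ ω, ⨆ i : Fin n, X (i : ℕ) ω) /
          (c * Real.Gamma (1 - 1 / α) * (n : ℝ) ^ (1 / α)))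
      atTop (𝓝 1) := by
  have hα0 : (0:ℝ) < α := by linarith
  have h1α : (0:ℝ) < 1 - 1/α := by
    have : 1/α < 1 := by rw [div_lt_one hα0]; exact hα
    linarith
  have hΓ : 0 < Real.Gamma (1 - 1/α) := Real.Gamma_pos_of_pos h1α
  set G : ℝ → ℝ := fun t => (ℙ {ω | X 0 ω > t}).toReal with hGdef
  set a : ℕ → ℝ := fun n => c * (n:ℝ) ^ (1/α : ℝ) with hadef
  have hG0 : ∀ t, 0 ≤ G t := fun t => ENNReal.toReal_nonneg
  have hG1 : ∀ t, G t ≤ 1 := by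
    intro t
    rw [hGdef]
    exact ENNReal.toReal_le_of_le_ofReal one_pos.le (by simpa using prob_le_one)
  have hGanti : Antitone G := by
    intro t t' h
    apply ENNReal.toReal_le_toReal (measure_ne_top _ _) (measure_ne_top _ _) |>.mpr
    exact measure_mono (fun ω hω => lt_of_le_of_lt h hω)
  have hGmeas : Measurable G := hGanti.measurable
  have han : ∀ n : ℕ, 1 ≤ n → 0 < a n := by
    intro n hn
    exact mul_pos hc (Real.rpow_pos_of_pos (by exact_mod_cast hn : (0:ℝ) < n) _)
  -- step 1: layer cake representation
  have hEn : ∀ n : ℕ, 1 ≤ n → (∫ ω, ⨆ i : Fin n, X (i:ℕ) ω)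
      = ∫ t in Set.Ioi (0:ℝ), (1 - (1 - G t)^n) := by
    intro n hn
    have hnpos : 0 < n := hn
    haveI : Nonempty (Fin n) := Fin.pos_iff_nonempty.mp hnpos
    set M : Ω → ℝ := fun ω => ⨆ i : Fin n, X (i:ℕ) ω with hMdef
    have hbdd : ∀ ω, BddAbove (Set.range fun i : Fin n => X (i:ℕ) ω) :=
      fun ω => (Set.finite_range _).bddAbove
    have hMeq : ∀ ω, M ω = Finset.univ.sup' Finset.univ_nonempty (fun i : Fin n => X (i:ℕ) ω) := by
      intro ω
      refine le_antisymm (ciSup_le fun i =>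
          Finset.le_sup' (f := fun i : Fin n => X (i:ℕ) ω) (Finset.mem_univ i))
        (Finset.sup'_le _ _ fun i _ => le_ciSup (hbdd ω) i)
    have hMmeas : Measurable M := by
      have h1 : Measurable (Finset.univ.sup' (Finset.univ_nonempty)
          (fun i : Fin n => fun ω => X (i:ℕ) ω)) :=
        Finset.measurable_sup' _ (fun i _ => hmeas i)
      have hMeq2 : M = Finset.univ.sup' Finset.univ_nonempty
          (fun i : Fin n => fun ω => X (i:ℕ) ω) := by
        funext ω; rw [hMeq ω, Finset.sup'_apply]
      rw [hMeq2]; exact h1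
    have hMnonneg : ∀ ω, 0 ≤ M ω :=
      fun ω => le_trans (hnonneg 0 ω) (by
        have := le_ciSup (hbdd ω) (⟨0, hnpos⟩ : Fin n)
        simpa using this)
    have hXint : ∀ i : ℕ, Integrable (X i) ℙ := fun i => (hident i).integrable_iff.mpr hint
    have hMint : Integrable M ℙ := by
      apply Integrable.mono (integrable_finset_sum Finset.univ
        (fun (i : Fin n) (_ : i ∈ Finset.univ) => hXint (i:ℕ))) hMmeas.aestronglyMeasurable
      apply Filter.Eventually.of_forall
      intro ω
      rw [Real.norm_of_nonneg (hMnonneg ω), Real.norm_of_nonneg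
        (Finset.sum_nonneg fun i _ => hnonneg _ ω)]
      exact ciSup_le fun i => Finset.single_le_sum
        (fun (j : Fin n) (_ : j ∈ Finset.univ) => hnonneg (j:ℕ) ω) (Finset.mem_univ i)
    -- layer cake
    rw [show (∫ ω, ⨆ i : Fin n, X (i:ℕ) ω) = ∫ ω, M ω from rfl,
      hMint.integral_eq_integral_meas_lt (Filter.Eventually.of_forall hMnonneg)]
    apply integral_congr_ae
    apply Filter.Eventually.of_forall
    intro t
    -- measure computation
    have hset : {a | t < M a}ᶜ = ⋂ i ∈ Finset.range n, X i ⁻¹' Set.Iic t := by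
      ext ω
      simp only [Set.mem_compl_iff, Set.mem_setOf_eq, not_lt, Set.mem_iInter, Set.mem_preimage,
        Set.mem_Iic, Finset.mem_range]
      constructor
      · intro h i hi
        exact le_trans (le_ciSup (hbdd ω) ⟨i, hi⟩) h
      · intro h
        exact ciSup_le fun i => h i i.2
    have hprod := hindep.measure_inter_preimage_eq_mul (Finset.range n)
      (sets := fun _ => Set.Iic t) (fun i _ => measurableSet_Iic)
    have hfac : ∀ i : ℕ, ℙ (X i ⁻¹' Set.Iic t) = 1 - ℙ {ω | X 0 ω > t} := by
      intro i
      rw [(hident i).measure_mem_eq measurableSet_Iic]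
      have h2 : X 0 ⁻¹' Set.Iic t = {ω | X 0 ω > t}ᶜ := by
        ext ω; simp [not_lt]
      rw [h2]
      exact prob_compl_eq_one_sub (measurableSet_lt measurable_const (hmeas 0))
    show (ℙ {a | t < M a}).toReal = 1 - (1 - G t)^n
    have hcap : ℙ {a | t < M a} = 1 - (1 - ℙ {ω | X 0 ω > t})^n := by
      have hmeascap : MeasurableSet (⋂ i ∈ Finset.range n, X i ⁻¹' Set.Iic t) :=
        MeasurableSet.biInter (Finset.range n).countable_toSet
          (fun i _ => (hmeas i) measurableSet_Iic)
      have h3 : ℙ {a | t < M a} = 1 - ℙ ({a | t < M a}ᶜ) := by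
        rw [prob_compl_eq_one_sub]
        · rw [ENNReal.sub_sub_cancel ENNReal.one_ne_top prob_le_one]
        · exact measurableSet_lt measurable_const hMmeas
      rw [h3, hset, hprod]
      congr 1
      rw [Finset.prod_congr rfl (fun i _ => hfac i), Finset.prod_const, Finset.card_range]
    -- toReal
    rw [hcap, hGdef]
    have hg1 : ℙ {ω | X 0 ω > t} ≤ 1 := prob_le_one
    have hpow1 : (1 - ℙ {ω | X 0 ω > t})^n ≤ 1 :=
      pow_le_one' tsub_le_self n
    rw [ENNReal.toReal_sub_of_le hpow1 ENNReal.one_ne_top, ENNReal.toReal_pow,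
      ENNReal.toReal_sub_of_le hg1 ENNReal.one_ne_top, ENNReal.toReal_one]
  -- step 2: rescaled integral via change of variables
  have hscale : ∀ n : ℕ, 1 ≤ n →
      (∫ t in Set.Ioi (0:ℝ), (1 - (1 - G t)^n))
        = a n * ∫ s in Set.Ioi (0:ℝ), (1 - (1 - G (a n * s))^n) := by
    intro n hn
    have h := integral_comp_mul_left_Ioi (fun t => 1 - (1 - G t)^n) 0 (han n hn)
    rw [mul_zero] at h
    rw [h, smul_eq_mul, ← mul_assoc, mul_inv_cancel₀ (han n hn).ne', one_mul]
  -- step 3: dominated convergence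
  have hDCT : Tendsto (fun n : ℕ => ∫ s in Set.Ioi (0:ℝ), (1 - (1 - G (a n * s))^n))
      atTop (𝓝 (Real.Gamma (1 - 1/α))) := by
    have hα0 : (0:ℝ) < α := by linarith
    have hatop : Tendsto a atTop atTop := by
      rw [hadef]
      exact (tendsto_rpow_atTop (by positivity : (0:ℝ) < 1/α)).comp
        tendsto_natCast_atTop_atTop |>.const_mul_atTop hc
    have han : ∀ n : ℕ, 1 ≤ n → 0 < a n := by
      intro n hn
      rw [hadef]
      exact mul_pos hc (Real.rpow_pos_of_pos (by exact_mod_cast hn) _)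
    -- tail bound
    obtain ⟨M, hM1, hM⟩ : ∃ M, 1 ≤ M ∧ ∀ x, M ≤ x → G x ≤ 2 * (c/x)^α ∧ 0 < G x := by
      have h1 : ∀ᶠ x : ℝ in atTop, G x / (c/x)^α ∈ Set.Ioo (1/2 : ℝ) (3/2 : ℝ) :=
        htail.eventually (Ioo_mem_nhds (by norm_num) (by norm_num))
      have h2 : ∀ᶠ x : ℝ in atTop, (0:ℝ) < x := eventually_gt_atTop 0
      obtain ⟨N, hN⟩ := (h1.and h2).exists_forall_of_atTop
      refine ⟨max N 1, le_max_right _ _, fun x hx => ?_⟩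
      obtain ⟨⟨hr1, hr2⟩, hx0⟩ := hN x (le_trans (le_max_left _ _) hx)
      have hcx : 0 < (c/x)^α := Real.rpow_pos_of_pos (by positivity) _
      constructor
      · nlinarith [div_lt_iff₀ hcx |>.mp hr2]
      · nlinarith [lt_div_iff₀ hcx |>.mp hr1]
    -- the key power computation
    have hpow : ∀ n : ℕ, 1 ≤ n → ∀ s : ℝ, 0 < s →
        (c / (a n * s)) ^ α = (n:ℝ)⁻¹ * s ^ (-α) := by
      intro n hn s hs
      have hn0 : (0:ℝ) < n := by exact_mod_cast hn
      have hnr : (0:ℝ) < (n:ℝ) ^ (1/α : ℝ) := Real.rpow_pos_of_pos hn0 _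
      rw [hadef]
      have h1 : c / (c * (n:ℝ) ^ (1/α : ℝ) * s) = (((n:ℝ) ^ (1/α : ℝ)) * s)⁻¹ := by
        field_simp
      calc (c / (c * (n:ℝ) ^ (1/α : ℝ) * s)) ^ α
          = ((((n:ℝ) ^ (1/α : ℝ)) * s)⁻¹) ^ α := by rw [h1]
        _ = ((((n:ℝ) ^ (1/α : ℝ)) * s) ^ α)⁻¹ := Real.inv_rpow (by positivity) α
        _ = (((n:ℝ) ^ (1/α : ℝ)) ^ α * s ^ α)⁻¹ := by
            rw [Real.mul_rpow (le_of_lt hnr) hs.le]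
        _ = ((n:ℝ) * s ^ α)⁻¹ := by
            rw [← Real.rpow_mul (Nat.cast_nonneg n), one_div_mul_cancel hα0.ne', Real.rpow_one]
        _ = (n:ℝ)⁻¹ * s ^ (-α) := by rw [mul_inv, Real.rpow_neg hs.le]
    -- dominating function
    set bound : ℝ → ℝ := fun s => if s ≤ 1 then 1 else 2 * s ^ (-α) with hbdef
    have hbint : IntegrableOn bound (Set.Ioi 0) := by
      have hsplit : Set.Ioi (0:ℝ) = Set.Ioc 0 1 ∪ Set.Ioi 1 :=
        (Set.Ioc_union_Ioi_eq_Ioi zero_le_one).symm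
      rw [hsplit, integrableOn_union]
      constructor
      · exact IntegrableOn.congr_fun (integrableOn_const measure_Ioc_lt_top.ne : IntegrableOn (fun _ => (1:ℝ)) (Set.Ioc (0:ℝ) 1))
          (fun x hx => by simp [hbdef, hx.2]) measurableSet_Ioc
      · exact IntegrableOn.congr_fun
          ((integrableOn_Ioi_rpow_of_lt (by linarith : -α < -1) one_pos).const_mul 2)
          (fun x hx => by simp only [hbdef]; rw [if_neg (not_le.mpr hx)]) measurableSet_Ioi
    rw [← aux_gamma_integral hα]
    apply tendsto_integral_filter_of_dominated_convergence bound
    · -- measurability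
      apply Filter.Eventually.of_forall
      intro n
      exact (((hGmeas.comp (measurable_const_mul (a n))).const_sub 1).pow_const n).const_sub 1
        |>.aestronglyMeasurable
    · -- boundedness
      filter_upwards [eventually_ge_atTop 1, hatop.eventually_ge_atTop M] with n hn hMn
      filter_upwards [ae_restrict_mem measurableSet_Ioi] with s hs
      have hs0 : (0:ℝ) < s := hs
      have hx01 : 0 ≤ 1 - G (a n * s) := by linarith [hG1 (a n * s)]
      have hx11 : 1 - G (a n * s) ≤ 1 := by linarith [hG0 (a n * s)]
      have hp0 : 0 ≤ (1 - G (a n * s))^n := pow_nonneg hx01 n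
      have hp1 : (1 - G (a n * s))^n ≤ 1 := pow_le_one₀ hx01 hx11
      rw [Real.norm_of_nonneg (by linarith)]
      by_cases hs1 : s ≤ 1
      · simp only [hbdef, if_pos hs1]
        linarith
      · simp only [hbdef, if_neg hs1]
        push_neg at hs1
        have hxM : M ≤ a n * s := by
          calc M ≤ a n := hMn
          _ = a n * 1 := (mul_one _).symm
          _ ≤ a n * s := by nlinarith [han n hn]
        obtain ⟨hGle, _⟩ := hM _ hxM
        have hbern : 1 - (n:ℝ) * G (a n * s) ≤ (1 - G (a n * s))^n := by
          have := one_add_mul_le_pow (a := -G (a n * s)) (by linarith [hG1 (a n * s)]) n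
          calc 1 - (n:ℝ) * G (a n * s) = 1 + (n:ℝ) * (-G (a n * s)) := by ring
          _ ≤ (1 + -G (a n * s))^n := this
          _ = (1 - G (a n * s))^n := by ring_nf
        have hkey : (n:ℝ) * G (a n * s) ≤ 2 * s ^ (-α) := by
          have h2 : G (a n * s) ≤ 2 * ((n:ℝ)⁻¹ * s ^ (-α)) := by
            rw [← hpow n hn s hs0]; exact hGle
          have hn0 : (0:ℝ) < n := by exact_mod_cast hn
          calc (n:ℝ) * G (a n * s) ≤ (n:ℝ) * (2 * ((n:ℝ)⁻¹ * s ^ (-α))) := by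
                exact mul_le_mul_of_nonneg_left h2 hn0.le
          _ = 2 * s ^ (-α) := by field_simp
        linarith
    · exact hbint
    · -- pointwise limit
      filter_upwards [ae_restrict_mem measurableSet_Ioi] with s hs
      have hs0 : (0:ℝ) < s := hs
      set u : ℕ → ℝ := fun n => G (a n * s) with hudef
      have hxs : Tendsto (fun n => a n * s) atTop atTop := hatop.atTop_mul_const hs0
      have h_pos : ∀ᶠ n in atTop, 0 < u n :=
        (hxs.eventually_ge_atTop M).mono fun n hn => (hM _ hn).2
      have hr : Tendsto (fun n : ℕ => u n / (c / (a n * s)) ^ α) atTop (𝓝 1) := htail.comp hxs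
      have hnu : Tendsto (fun n : ℕ => (n:ℝ) * u n) atTop (𝓝 (s ^ (-α))) := by
        have h2 := hr.mul_const (s ^ (-α))
        rw [one_mul] at h2
        apply h2.congr'
        filter_upwards [eventually_ge_atTop 1] with n hn
        rw [hpow n hn s hs0]
        have hn0 : ((n:ℝ)) ≠ 0 := by positivity -- may fail
        have hsa : s ^ (-α) ≠ 0 := (Real.rpow_pos_of_pos hs0 _).ne'
        field_simp
      have := (aux_pow_lim h_pos hnu).const_sub 1
      rw [show (1 : ℝ) - Real.exp (-(s ^ (-α))) = 1 - Real.exp (-s ^ (-α)) from rfl] at this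
      exact this
  -- final assembly
  have hfin : Tendsto (fun n : ℕ =>
      (∫ s in Set.Ioi (0:ℝ), (1 - (1 - G (a n * s))^n)) / Real.Gamma (1 - 1/α))
      atTop (𝓝 1) := by
    have := hDCT.div_const (Real.Gamma (1 - 1/α))
    rwa [div_self hΓ.ne'] at this
  apply hfin.congr'
  filter_upwards [eventually_ge_atTop 1] with n hn
  rw [hEn n hn, hscale n hn]
  have h1 : c * Real.Gamma (1 - 1/α) * (n:ℝ) ^ (1/α : ℝ) = Real.Gamma (1 - 1/α) * a n := by
    rw [hadef]; ring
  rw [h1]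
  rw [mul_comm (Real.Gamma (1 - 1/α)) (a n), mul_div_mul_left _ _ (han n hn).ne']
end

section
/- Let X be a nonnegative random variable with finite mean whose distribution has an exponential tail with parameters (c, λ), i.e., lim_{x→∞} P(X > x)/(c·exp(−λx)) = 1, where c > 0 and λ > 0. Let X_{(n:n)} denote the maximum of n i.i.d. copies of X. Then lim_{n→∞} E[X_{(n:n)}] / (ln n / λ) = 1. -/
open MeasureTheory ProbabilityTheory Filter Topology

lemma measurable_iSup_fin {Ω : Type*} [MeasurableSpace Ω] (X : ℕ → Ω → ℝ)
    (hmeas : ∀ i, Measurable (X i)) (n : ℕ) :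
    Measurable (fun ω => ⨆ i : Fin n, X (i : ℕ) ω) := by
  cases n with
  | zero => simp only [Real.iSup_of_isEmpty]; exact measurable_const
  | succ n =>
    have h : (fun ω => ⨆ i : Fin (n+1), X (i : ℕ) ω)
        = (Finset.univ.sup' Finset.univ_nonempty (fun i : Fin (n+1) => X (i : ℕ))) := by
      ext ω
      rw [Finset.sup'_apply, Finset.sup'_univ_eq_ciSup]
    rw [h]
    exact Finset.measurable_sup' _ (fun i _ => hmeas (i : ℕ))

/-- If `X` is a nonnegative random variable with finite mean whose
distribution has an exponential tail with parameters `(c, λ)`, and `X_{(n:n)}` denotes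
the maximum of `n` i.i.d. copies of `X`, then `E[X_{(n:n)}] / (ln n / λ) → 1`. -/
theorem expected_maximum_exponential_tail
    {Ω : Type*} [MeasureSpace Ω] [IsProbabilityMeasure (ℙ : Measure Ω)]
    (c lam : ℝ) (hc : 0 < c) (hlam : 0 < lam)
    (X : ℕ → Ω → ℝ) (hmeas : ∀ i, Measurable (X i))
    (hnonneg : ∀ i ω, 0 ≤ X i ω)
    (hint : Integrable (X 0) ℙ)
    (hindep : iIndepFun X ℙ)
    (hident : ∀ i, IdentDistrib (X i) (X 0) ℙ ℙ)
    (htail : Tendsto (fun x : ℝ => (ℙ {ω | X 0 ω > x}).toReal / (c * Real.exp (-lam * x)))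
      atTop (𝓝 1)) :
    Tendsto (fun n : ℕ =>
        (∫ ω, ⨆ i : Fin n, X (i : ℕ) ω) / (Real.log n / lam))
      atTop (𝓝 1) := by
  set G : ℝ → ℝ := fun x => (ℙ {ω | X 0 ω > x}).toReal with hGdef
  have hXint : ∀ i, Integrable (X i) ℙ := fun i => (hident i).integrable_iff.mpr hint
  have hMmeas : ∀ n, Measurable (fun ω => ⨆ i : Fin n, X (i : ℕ) ω) :=
    measurable_iSup_fin X hmeas
  have hMnn : ∀ n ω, 0 ≤ ⨆ i : Fin n, X (i : ℕ) ω :=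
    fun n ω => Real.iSup_nonneg (fun i => hnonneg _ ω)
  have hMleSum : ∀ n ω, (⨆ i : Fin n, X (i : ℕ) ω) ≤ ∑ i ∈ Finset.range n, X i ω := by
    intro n ω
    refine Real.iSup_le (fun i => ?_) (Finset.sum_nonneg fun i _ => hnonneg i ω)
    exact Finset.single_le_sum (fun j _ => hnonneg j ω) (Finset.mem_range.2 i.isLt)
  have hMint : ∀ n, Integrable (fun ω => ⨆ i : Fin n, X (i : ℕ) ω) ℙ := by
    intro n
    refine (integrable_finset_sum (Finset.range n) (fun i _ => hXint i)).mono'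
      (hMmeas n).aestronglyMeasurable (ae_of_all _ fun ω => ?_)
    rw [Real.norm_eq_abs, abs_of_nonneg (hMnn n ω)]
    exact hMleSum n ω
  have hGle1 : ∀ x, G x ≤ 1 := by
    intro x
    rw [hGdef]
    exact ENNReal.toReal_le_of_le_ofReal zero_le_one (by simpa using prob_le_one)
  -- tail bounds
  have htail2 : ∀ᶠ x in atTop, G x / (c * Real.exp (-lam * x)) ∈ Set.Ioo (1/2 : ℝ) 2 :=
    htail (Ioo_mem_nhds (by norm_num) (by norm_num))
  obtain ⟨T, hT⟩ := eventually_atTop.mp htail2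
  have hub : ∀ x, T ≤ x → G x ≤ 2 * (c * Real.exp (-lam * x)) := by
    intro x hx
    have hd : 0 < c * Real.exp (-lam * x) := mul_pos hc (Real.exp_pos _)
    have h2 := (hT x hx).2
    calc G x = G x / (c * Real.exp (-lam * x)) * (c * Real.exp (-lam * x)) :=
          (div_mul_cancel₀ _ hd.ne').symm
      _ ≤ 2 * (c * Real.exp (-lam * x)) := mul_le_mul_of_nonneg_right h2.le hd.le
  have hlb : ∀ x, T ≤ x → c / 2 * Real.exp (-lam * x) ≤ G x := by
    intro x hx
    have hd : 0 < c * Real.exp (-lam * x) := mul_pos hc (Real.exp_pos _)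
    have h1 := (hT x hx).1
    have h2 := mul_le_mul_of_nonneg_right h1.le hd.le
    calc c / 2 * Real.exp (-lam * x) = 1/2 * (c * Real.exp (-lam * x)) := by ring
      _ ≤ G x / (c * Real.exp (-lam * x)) * (c * Real.exp (-lam * x)) := h2
      _ = G x := div_mul_cancel₀ _ hd.ne'
  -- expected positive part bound
  have hposint : ∀ a : ℝ, Integrable (fun ω => max (X 0 ω - a) 0) ℙ :=
    fun a => (hint.sub (integrable_const a)).pos_part
  have hU1 : ∀ a : ℝ, T ≤ a → (∫ ω, max (X 0 ω - a) 0) ≤ 2 * c / lam * Real.exp (-lam * a) := by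
    intro a ha
    have hnn : 0 ≤ᵐ[(ℙ : Measure Ω)] fun ω => max (X 0 ω - a) 0 :=
      ae_of_all _ fun ω => le_max_right _ _
    rw [(hposint a).integral_eq_integral_meas_lt hnn]
    have hbd : ∀ t ∈ Set.Ioi (0:ℝ),
        (ℙ {ω | t < max (X 0 ω - a) 0}).toReal
          ≤ 2 * c * Real.exp (-lam * a) * Real.exp (-lam * t) := by
      intro t ht
      have ht' : (0:ℝ) < t := ht
      have hset : {ω | t < max (X 0 ω - a) 0} = {ω | X 0 ω > a + t} := by
        ext ω
        simp only [Set.mem_setOf_eq, lt_max_iff, gt_iff_lt]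
        constructor
        · rintro (h | h) <;> linarith
        · intro h; left; linarith
      have heq : (ℙ {ω | t < max (X 0 ω - a) 0}).toReal = G (a + t) := by rw [hset, hGdef]
      rw [heq]
      calc G (a + t) ≤ 2 * (c * Real.exp (-lam * (a + t))) := hub _ (by linarith)
        _ = 2 * c * Real.exp (-lam * a) * Real.exp (-lam * t) := by
            rw [show -lam * (a + t) = -lam * a + -lam * t by ring, Real.exp_add]; ring
    have hgint : IntegrableOn (fun t => 2 * c * Real.exp (-lam * a) * Real.exp (-lam * t))
        (Set.Ioi (0:ℝ)) := (exp_neg_integrableOn_Ioi 0 hlam).const_mul _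
    calc (∫ t in Set.Ioi (0:ℝ), (ℙ {ω | t < max (X 0 ω - a) 0}).toReal)
        ≤ ∫ t in Set.Ioi (0:ℝ), 2 * c * Real.exp (-lam * a) * Real.exp (-lam * t) := by
          refine integral_mono_of_nonneg (ae_of_all _ fun t => ENNReal.toReal_nonneg) hgint ?_
          exact (ae_restrict_iff' measurableSet_Ioi).2 (ae_of_all _ hbd)
      _ = 2 * c * Real.exp (-lam * a) * ∫ t in Set.Ioi (0:ℝ), Real.exp (-lam * t) := by
          rw [integral_const_mul]
      _ = 2 * c / lam * Real.exp (-lam * a) := by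
          have hval : (∫ t in Set.Ioi (0:ℝ), Real.exp (-lam * t)) = lam⁻¹ := by
            have h1 : (∫ t in Set.Ioi (0:ℝ), Real.exp (-lam * t))
                = ∫ t in Set.Ioi (0:ℝ), (fun x => Real.exp (-x)) (lam * t) := by
              congr 1; ext t; simp [neg_mul]
            rw [h1, integral_comp_mul_left_Ioi (fun x => Real.exp (-x)) 0 hlam]
            simp [integral_exp_neg_Ioi, integral_exp_Iic_zero]
          rw [hval]; ring
  -- upper integral bound
  have hU2 : ∀ (n : ℕ) (a : ℝ), 0 ≤ a →
      (∫ ω, ⨆ i : Fin n, X (i : ℕ) ω) ≤ a + n * ∫ ω, max (X 0 ω - a) 0 := by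
    intro n a ha
    have hptw : ∀ ω, (⨆ i : Fin n, X (i : ℕ) ω)
        ≤ a + ∑ i ∈ Finset.range n, max (X i ω - a) 0 := by
      intro ω
      refine Real.iSup_le (fun i => ?_) ?_
      · have h1 : X (i : ℕ) ω - a ≤ max (X (i : ℕ) ω - a) 0 := le_max_left _ _
        have h2 : max (X (i : ℕ) ω - a) 0 ≤ ∑ j ∈ Finset.range n, max (X j ω - a) 0 :=
          Finset.single_le_sum (f := fun j => max (X j ω - a) 0)
            (fun j _ => le_max_right _ _) (Finset.mem_range.2 i.isLt)
        linarith
      · have h3 : 0 ≤ ∑ j ∈ Finset.range n, max (X j ω - a) 0 :=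
          Finset.sum_nonneg fun j _ => le_max_right _ _
        linarith
    have hterm : ∀ i : ℕ, Integrable (fun ω => max (X i ω - a) 0) ℙ :=
      fun i => ((hXint i).sub (integrable_const a)).pos_part
    have hrint : Integrable (fun ω => a + ∑ i ∈ Finset.range n, max (X i ω - a) 0) ℙ :=
      (integrable_const a).add (integrable_finset_sum _ fun i _ => hterm i)
    have heach : ∀ i : ℕ, (∫ ω, max (X i ω - a) 0) = ∫ ω, max (X 0 ω - a) 0 := fun i =>
      ((hident i).comp ((measurable_id.sub_const a).max measurable_const)).integral_eq
    calc (∫ ω, ⨆ i : Fin n, X (i : ℕ) ω)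
        ≤ ∫ ω, (a + ∑ i ∈ Finset.range n, max (X i ω - a) 0) :=
          integral_mono (hMint n) hrint hptw
      _ = a + ∑ i ∈ Finset.range n, ∫ ω, max (X i ω - a) 0 := by
          rw [integral_add (integrable_const a) (integrable_finset_sum _ fun i _ => hterm i),
            integral_const, integral_finset_sum _ fun i _ => hterm i]
          simp
      _ = a + n * ∫ ω, max (X 0 ω - a) 0 := by
          rw [Finset.sum_congr rfl (fun i _ => heach i), Finset.sum_const, Finset.card_range,
            nsmul_eq_mul]
  -- lower bound
  have hL : ∀ (n : ℕ) (b : ℝ), 0 ≤ b →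
      b * (1 - (1 - G b)^n) ≤ ∫ ω, ⨆ i : Fin n, X (i : ℕ) ω := by
    intro n b hb
    set A : Set Ω := ⋂ i ∈ Finset.range n, X i ⁻¹' Set.Iic b with hA
    have hmeasA : MeasurableSet A :=
      MeasurableSet.biInter (Finset.range n).countable_toSet
        (fun i _ => (hmeas i) measurableSet_Iic)
    set p : ℝ := (ℙ (X 0 ⁻¹' Set.Iic b)).toReal with hp
    have hprod : ℙ A = (ℙ (X 0 ⁻¹' Set.Iic b))^n := by
      rw [hA, hindep.meas_biInter (fun i _ => ⟨Set.Iic b, measurableSet_Iic, rfl⟩),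
        Finset.prod_congr rfl (fun i _ => (hident i).measure_mem_eq measurableSet_Iic),
        Finset.prod_const, Finset.card_range]
    have hsub : Aᶜ ⊆ {ω | b ≤ ⨆ i : Fin n, X (i : ℕ) ω} := by
      intro ω hω
      simp only [hA, Set.mem_compl_iff, Set.mem_iInter, not_forall] at hω
      obtain ⟨i, hi, hXi⟩ := hω
      simp only [Set.mem_preimage, Set.mem_Iic, not_le] at hXi
      have hle : X i ω ≤ ⨆ j : Fin n, X (j : ℕ) ω :=
        le_ciSup (f := fun j : Fin n => X (j : ℕ) ω)
          (Set.Finite.bddAbove (Set.finite_range _)) (⟨i, Finset.mem_range.mp hi⟩ : Fin n)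
      exact le_trans hXi.le hle
    have hpc : 1 - G b = p := by
      have hs : {ω | X 0 ω > b} = (X 0 ⁻¹' Set.Iic b)ᶜ := by
        ext ω; simp [Set.mem_compl_iff, not_le]
      have hGb : G b = 1 - p := by
        rw [hGdef]
        simp only [hs]
        rw [prob_compl_eq_one_sub ((hmeas 0) measurableSet_Iic),
          ENNReal.toReal_sub_of_le prob_le_one (by simp), ENNReal.toReal_one]
      linarith
    have hcompl : (ℙ Aᶜ).toReal = 1 - p^n := by
      rw [prob_compl_eq_one_sub hmeasA, hprod,
        ENNReal.toReal_sub_of_le (pow_le_one' prob_le_one n) (by simp),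
        ENNReal.toReal_one, ENNReal.toReal_pow]
    have hmono : (ℙ Aᶜ).toReal ≤ (ℙ {ω | b ≤ ⨆ i : Fin n, X (i : ℕ) ω}).toReal :=
      ENNReal.toReal_mono (measure_ne_top _ _) (measure_mono hsub)
    have hmarkov := mul_meas_ge_le_integral_of_nonneg
      (μ := (ℙ : Measure Ω)) (ae_of_all _ (hMnn n)) (hMint n) b
    calc b * (1 - (1 - G b)^n) = b * (ℙ Aᶜ).toReal := by rw [hpc, hcompl]
      _ ≤ b * (ℙ {ω | b ≤ ⨆ i : Fin n, X (i : ℕ) ω}).toReal :=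
          mul_le_mul_of_nonneg_left hmono hb
      _ ≤ ∫ ω, ⨆ i : Fin n, X (i : ℕ) ω := hmarkov
  -- conclusion
  rw [tendsto_order]
  constructor
  · -- lower bound on the limit
    intro K hK
    set δ : ℝ := min (1/2) ((1 - K)/2) with hδ
    have hδpos : 0 < δ := lt_min (by norm_num) (by linarith)
    have hδle : δ ≤ 1/2 := min_le_left _ _
    have hKδ : K < 1 - δ := by
      have h := min_le_right (1/2 : ℝ) ((1 - K)/2)
      have : δ ≤ (1 - K)/2 := h
      linarith
    have h1δ : (0:ℝ) < 1 - δ := by linarith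
    have hnd : Tendsto (fun n : ℕ => (n:ℝ) ^ δ) atTop atTop :=
      (tendsto_rpow_atTop hδpos).comp tendsto_natCast_atTop_atTop
    have hexp0 : Tendsto (fun n : ℕ => Real.exp (-(c/2 * (n:ℝ) ^ δ))) atTop (𝓝 0) :=
      Real.tendsto_exp_atBot.comp
        (tendsto_neg_atTop_atBot.comp (hnd.const_mul_atTop (by linarith : (0:ℝ) < c/2)))
    have hltend : Tendsto (fun n : ℕ => (1 - δ) * (1 - Real.exp (-(c/2 * (n:ℝ) ^ δ))))
        atTop (𝓝 (1 - δ)) := by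
      have h0 := ((tendsto_const_nhds (x := (1:ℝ)) (f := atTop)).sub hexp0).const_mul (1 - δ)
      simpa using h0
    have hev1 : ∀ᶠ n : ℕ in atTop, K < (1 - δ) * (1 - Real.exp (-(c/2 * (n:ℝ) ^ δ))) :=
      hltend.eventually (eventually_gt_nhds hKδ)
    have hbtend : Tendsto (fun n : ℕ => (1 - δ) * Real.log n / lam) atTop atTop :=
      ((Real.tendsto_log_atTop.comp tendsto_natCast_atTop_atTop).const_mul_atTop h1δ).atTop_div_const hlam
    have hev2 : ∀ᶠ n : ℕ in atTop, T ≤ (1 - δ) * Real.log n / lam :=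
      hbtend.eventually_ge_atTop T
    filter_upwards [hev1, hev2, eventually_ge_atTop 2] with n h1 h2 h3
    have hn1 : (1:ℝ) < n := by exact_mod_cast Nat.lt_of_lt_of_le one_lt_two h3
    have hnpos : (0:ℝ) < n := lt_trans zero_lt_one hn1
    have hlogpos : 0 < Real.log n := Real.log_pos hn1
    set b : ℝ := (1 - δ) * Real.log n / lam with hb
    have hbnn : 0 ≤ b := div_nonneg (mul_nonneg h1δ.le hlogpos.le) hlam.le
    have hkey := hL n b hbnn
    -- (1 - G b)^n ≤ exp (-(c/2 * n^δ))
    have hGb1 : G b ≤ 1 := hGle1 b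
    have hGbnn : 0 ≤ G b := ENNReal.toReal_nonneg
    have hstep1 : (1 - G b)^n ≤ (Real.exp (-G b))^n := by
      refine pow_le_pow_left₀ (by linarith) ?_ n
      have := Real.add_one_le_exp (-G b)
      linarith
    have hstep2 : (Real.exp (-G b))^n = Real.exp (-((n:ℝ) * G b)) := by
      rw [← Real.exp_nat_mul]; ring_nf
    have hrw : (n:ℝ) * Real.exp (-lam * b) = (n:ℝ) ^ δ := by
      have he : -lam * b = Real.log n * (-(1 - δ)) := by
        rw [hb]; field_simp
      rw [he, ← Real.rpow_def_of_pos hnpos]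
      calc (n:ℝ) * (n:ℝ) ^ (-(1 - δ)) = (n:ℝ) ^ (1:ℝ) * (n:ℝ) ^ (-(1 - δ)) := by
            rw [Real.rpow_one]
        _ = (n:ℝ) ^ (1 + -(1 - δ)) := (Real.rpow_add hnpos _ _).symm
        _ = (n:ℝ) ^ δ := by ring_nf
    have hstep3 : c/2 * (n:ℝ) ^ δ ≤ (n:ℝ) * G b := by
      have h4 := mul_le_mul_of_nonneg_left (hlb b h2) hnpos.le
      calc c/2 * (n:ℝ) ^ δ = (n:ℝ) * (c/2 * Real.exp (-lam * b)) := by rw [← hrw]; ring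
        _ ≤ (n:ℝ) * G b := h4
    have hpow : (1 - G b)^n ≤ Real.exp (-(c/2 * (n:ℝ) ^ δ)) := by
      calc (1 - G b)^n ≤ Real.exp (-((n:ℝ) * G b)) := hstep2 ▸ hstep1
        _ ≤ Real.exp (-(c/2 * (n:ℝ) ^ δ)) := Real.exp_le_exp.2 (neg_le_neg hstep3)
    have hLpos : 0 < Real.log n / lam := div_pos hlogpos hlam
    rw [lt_div_iff₀ hLpos]
    calc K * (Real.log n / lam)
        < (1 - δ) * (1 - Real.exp (-(c/2 * (n:ℝ) ^ δ))) * (Real.log n / lam) :=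
          mul_lt_mul_of_pos_right h1 hLpos
      _ = b * (1 - Real.exp (-(c/2 * (n:ℝ) ^ δ))) := by rw [hb]; ring
      _ ≤ b * (1 - (1 - G b)^n) :=
          mul_le_mul_of_nonneg_left (by linarith) hbnn
      _ ≤ ∫ ω, ⨆ i : Fin n, X (i : ℕ) ω := hkey
  · -- upper bound on the limit
    intro K hK
    set ε : ℝ := (K - 1)/2 with hε
    have hεpos : 0 < ε := by rw [hε]; linarith
    have hεK : 1 + ε < K := by rw [hε]; linarith
    have hr0 : Tendsto (fun n : ℕ => (n:ℝ) ^ (-ε)) atTop (𝓝 0) :=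
      (tendsto_rpow_neg_atTop hεpos).comp tendsto_natCast_atTop_atTop
    have hinv0 : Tendsto (fun n : ℕ => (Real.log n)⁻¹) atTop (𝓝 0) :=
      tendsto_inv_atTop_zero.comp (Real.tendsto_log_atTop.comp tendsto_natCast_atTop_atTop)
    have hutend : Tendsto (fun n : ℕ => (1 + ε) + 2 * c * ((n:ℝ) ^ (-ε) * (Real.log n)⁻¹))
        atTop (𝓝 (1 + ε)) := by
      have h0 := ((hr0.mul hinv0).const_mul (2 * c)).const_add (1 + ε)
      simpa using h0
    have hev1 : ∀ᶠ n : ℕ in atTop,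
        (1 + ε) + 2 * c * ((n:ℝ) ^ (-ε) * (Real.log n)⁻¹) < K :=
      hutend.eventually (eventually_lt_nhds hεK)
    have hatend : Tendsto (fun n : ℕ => (1 + ε) * Real.log n / lam) atTop atTop :=
      ((Real.tendsto_log_atTop.comp tendsto_natCast_atTop_atTop).const_mul_atTop
        (by linarith : (0:ℝ) < 1 + ε)).atTop_div_const hlam
    have hev2 : ∀ᶠ n : ℕ in atTop, T ≤ (1 + ε) * Real.log n / lam :=
      hatend.eventually_ge_atTop T
    filter_upwards [hev1, hev2, eventually_ge_atTop 2] with n h1 h2 h3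
    have hn1 : (1:ℝ) < n := by exact_mod_cast Nat.lt_of_lt_of_le one_lt_two h3
    have hnpos : (0:ℝ) < n := lt_trans zero_lt_one hn1
    have hlogpos : 0 < Real.log n := Real.log_pos hn1
    set a : ℝ := (1 + ε) * Real.log n / lam with ha
    have hann : 0 ≤ a := div_nonneg (mul_nonneg (by linarith) hlogpos.le) hlam.le
    have hrw : (n:ℝ) * Real.exp (-lam * a) = (n:ℝ) ^ (-ε) := by
      have he : -lam * a = Real.log n * (-(1 + ε)) := by
        rw [ha]; field_simp
      rw [he, ← Real.rpow_def_of_pos hnpos]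
      calc (n:ℝ) * (n:ℝ) ^ (-(1 + ε)) = (n:ℝ) ^ (1:ℝ) * (n:ℝ) ^ (-(1 + ε)) := by
            rw [Real.rpow_one]
        _ = (n:ℝ) ^ (1 + -(1 + ε)) := (Real.rpow_add hnpos _ _).symm
        _ = (n:ℝ) ^ (-ε) := by ring_nf
    have hEbound : (∫ ω, ⨆ i : Fin n, X (i : ℕ) ω)
        ≤ a + 2 * c / lam * (n:ℝ) ^ (-ε) := by
      calc (∫ ω, ⨆ i : Fin n, X (i : ℕ) ω)
          ≤ a + n * ∫ ω, max (X 0 ω - a) 0 := hU2 n a hann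
        _ ≤ a + n * (2 * c / lam * Real.exp (-lam * a)) := by
            have := mul_le_mul_of_nonneg_left (hU1 a h2) (Nat.cast_nonneg n : (0:ℝ) ≤ n)
            linarith
        _ = a + 2 * c / lam * (n:ℝ) ^ (-ε) := by rw [← hrw]; ring
    have hLpos : 0 < Real.log n / lam := div_pos hlogpos hlam
    rw [div_lt_iff₀ hLpos]
    calc (∫ ω, ⨆ i : Fin n, X (i : ℕ) ω)
        ≤ a + 2 * c / lam * (n:ℝ) ^ (-ε) := hEbound
      _ = ((1 + ε) + 2 * c * ((n:ℝ) ^ (-ε) * (Real.log n)⁻¹)) * (Real.log n / lam) := by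
          rw [ha]; field_simp
      _ < K * (Real.log n / lam) := mul_lt_mul_of_pos_right h1 hLpos
end

section
/- Fix ρ ∈ (0,1). Let X and Y be independent nonnegative random variables with finite means, where X has a Pareto tail with parameters (c_X, α_X) and Y has a Pareto tail with parameters (c_Y, α_Y), with α_X < α_Y. Then Z = (1−ρ)X + ρY has a Pareto tail with parameters ((1−ρ)c_X, α_X). -/
open MeasureTheory ProbabilityTheory Filter Topology

/-- Fix `ρ ∈ (0,1)`. If `X` and `Y` are independent nonnegative random
variables with finite means, `X` with Pareto tail `(c_X, α_X)` and `Y` with Pareto tail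
`(c_Y, α_Y)`, where `α_X < α_Y`, then `Z = (1−ρ)X + ρY` has a Pareto tail with
parameters `((1−ρ)c_X, α_X)`. -/
theorem pareto_tail_convex_combination_lighter
    {Ω : Type*} [MeasureSpace Ω] [IsProbabilityMeasure (ℙ : Measure Ω)]
    (ρ : ℝ) (hρ : ρ ∈ Set.Ioo (0 : ℝ) 1)
    (cX αX cY αY : ℝ) (hcX : 0 < cX) (hαX : 1 < αX) (hcY : 0 < cY) (hαY : 1 < αY)
    (hαXY : αX < αY)
    (X Y : Ω → ℝ) (hXmeas : Measurable X) (hYmeas : Measurable Y)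
    (hXnonneg : ∀ ω, 0 ≤ X ω) (hYnonneg : ∀ ω, 0 ≤ Y ω)
    (hXint : Integrable X ℙ) (hYint : Integrable Y ℙ)
    (hindep : IndepFun X Y ℙ)
    (hXtail : Tendsto (fun x : ℝ => (ℙ {ω | X ω > x}).toReal / (cX / x) ^ αX)
      atTop (𝓝 1))
    (hYtail : Tendsto (fun x : ℝ => (ℙ {ω | Y ω > x}).toReal / (cY / x) ^ αY)
      atTop (𝓝 1)) :
    Tendsto (fun t : ℝ =>
        (ℙ {ω | (1 - ρ) * X ω + ρ * Y ω > t}).toReal / ((1 - ρ) * cX / t) ^ αX)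
      atTop (𝓝 1) := by
  obtain ⟨hρ0, hρ1⟩ := hρ
  have hβ : (0:ℝ) < 1 - ρ := by linarith
  set P : ℝ → ℝ := fun x => (ℙ {ω | X ω > x}).toReal with hPdef
  set Q : ℝ → ℝ := fun x => (ℙ {ω | Y ω > x}).toReal with hQdef
  set F : ℝ → ℝ := fun t => (ℙ {ω | (1 - ρ) * X ω + ρ * Y ω > t}).toReal with hFdef
  have hDpos : ∀ t : ℝ, 0 < t → 0 < ((1 - ρ) * cX / t) ^ αX := fun t ht =>
    Real.rpow_pos_of_pos (div_pos (mul_pos hβ hcX) ht) _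
  have hPnonneg : ∀ x, 0 ≤ P x := fun x => ENNReal.toReal_nonneg
  have hQnonneg : ∀ x, 0 ≤ Q x := fun x => ENNReal.toReal_nonneg
  -- lower bound function
  have hg : Tendsto (fun t : ℝ => P (t / (1 - ρ)) / ((1 - ρ) * cX / t) ^ αX)
      atTop (𝓝 1) := by
    have hcomp : Tendsto (fun t : ℝ => P (t / (1 - ρ)) / (cX / (t / (1 - ρ))) ^ αX)
        atTop (𝓝 1) :=
      hXtail.comp (Tendsto.atTop_div_const hβ tendsto_id)
    refine hcomp.congr' ?_
    filter_upwards [eventually_gt_atTop (0:ℝ)] with t ht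
    have hbase : cX / (t / (1 - ρ)) = (1 - ρ) * cX / t := by
      field_simp
    rw [hbase]
  have hlow : ∀ᶠ t : ℝ in atTop,
      P (t / (1 - ρ)) / ((1 - ρ) * cX / t) ^ αX ≤ F t / ((1 - ρ) * cX / t) ^ αX := by
    filter_upwards [eventually_gt_atTop (0:ℝ)] with t ht
    apply div_le_div_of_nonneg_right ?_ (hDpos t ht).le
    · apply ENNReal.toReal_mono (measure_ne_top _ _)
      apply measure_mono
      intro ω hω
      simp only [Set.mem_setOf_eq, gt_iff_lt] at hω ⊢
      rw [div_lt_iff₀ hβ] at hω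
      have hY : 0 ≤ ρ * Y ω := mul_nonneg hρ0.le (hYnonneg ω)
      nlinarith
  rw [tendsto_order]
  constructor
  · -- lower: for a < 1, eventually a < F t / D t
    intro a ha
    filter_upwards [hlow, hg.eventually (eventually_gt_nhds ha)] with t h1 h2
    exact lt_of_lt_of_le h2 h1
  · -- upper: for a > 1
    intro a ha
    have hαXpos : (0:ℝ) < αX := by linarith
    set m : ℝ := a ^ (-αX⁻¹) with hm
    have hapos : (0:ℝ) < a := by linarith
    have hmpos : 0 < m := Real.rpow_pos_of_pos hapos _
    have hm1 : m < 1 := Real.rpow_lt_one_of_one_lt_of_neg ha (by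
      rw [neg_lt, neg_zero]; positivity)
    set b : ℝ := (m + 1) / 2 with hb
    have hbm : m < b := by rw [hb]; linarith
    have hb1 : b < 1 := by rw [hb]; linarith
    have hbpos : 0 < b := by rw [hb]; linarith
    set δ : ℝ := 1 - b with hδ
    have hδ0 : 0 < δ := by rw [hδ]; linarith
    have hδ1 : δ < 1 := by rw [hδ]; linarith
    have h1δ : (0:ℝ) < 1 - δ := by rw [hδ]; linarith
    set K : ℝ := (1 - δ) ^ (-αX) with hK
    have hKa : K < a := by
      have h1 : (1 - δ : ℝ) = b := by rw [hδ]; ring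
      have h3 : b ^ (-αX) < m ^ (-αX) :=
        Real.rpow_lt_rpow_of_neg hmpos hbm (by linarith)
      have h4 : m ^ (-αX) = a := by
        rw [hm, ← Real.rpow_mul hapos.le, neg_mul_neg,
          inv_mul_cancel₀ hαXpos.ne', Real.rpow_one]
      rw [hK, h1]; rw [h4] at h3; exact h3
    have hKpos : 0 < K := Real.rpow_pos_of_pos h1δ _
    -- first correction term
    have hs : Tendsto (fun t : ℝ => (1 - δ) * t / (1 - ρ)) atTop atTop :=
      Tendsto.atTop_div_const hβ (tendsto_id.const_mul_atTop h1δ)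
    have hH1 : Tendsto (fun t : ℝ => P ((1 - δ) * t / (1 - ρ)) / ((1 - ρ) * cX / t) ^ αX)
        atTop (𝓝 K) := by
      have hcomp : Tendsto (fun t : ℝ =>
          P ((1 - δ) * t / (1 - ρ)) / (cX / ((1 - δ) * t / (1 - ρ))) ^ αX * K)
          atTop (𝓝 (1 * K)) := (hXtail.comp hs).mul_const K
      rw [one_mul] at hcomp
      refine hcomp.congr' ?_
      filter_upwards [eventually_gt_atTop (0:ℝ)] with t ht
      have hbase : cX / ((1 - δ) * t / (1 - ρ)) = ((1 - ρ) * cX / t) * (1 - δ)⁻¹ := by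
        field_simp
      have hpow : (cX / ((1 - δ) * t / (1 - ρ))) ^ αX = ((1 - ρ) * cX / t) ^ αX * K := by
        rw [hbase, Real.mul_rpow (div_nonneg (mul_nonneg hβ.le hcX.le) ht.le)
          (inv_nonneg.mpr h1δ.le), hK, Real.inv_rpow h1δ.le, Real.rpow_neg h1δ.le]
      show P ((1 - δ) * t / (1 - ρ)) / (cX / ((1 - δ) * t / (1 - ρ))) ^ αX * K
          = P ((1 - δ) * t / (1 - ρ)) / ((1 - ρ) * cX / t) ^ αX
      rw [hpow]
      have hA : ((1 - ρ) * cX / t) ^ αX ≠ 0 := (hDpos t ht).ne'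
      field_simp
    -- second term tends to 0
    set C : ℝ := (cY * ρ / δ) ^ αY / ((1 - ρ) * cX) ^ αX with hC
    have hu : Tendsto (fun t : ℝ => δ * t / ρ) atTop atTop :=
      Tendsto.atTop_div_const hρ0 (tendsto_id.const_mul_atTop hδ0)
    have hH2 : Tendsto (fun t : ℝ => Q (δ * t / ρ) / ((1 - ρ) * cX / t) ^ αX)
        atTop (𝓝 0) := by
      have hpw : Tendsto (fun t : ℝ => t ^ (αX - αY)) atTop (𝓝 0) := by
        have h := tendsto_rpow_neg_atTop (y := αY - αX) (by linarith)
        refine h.congr fun t => ?_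
        rw [show -(αY - αX) = αX - αY by ring]
      have hcomp : Tendsto (fun t : ℝ =>
          Q (δ * t / ρ) / (cY / (δ * t / ρ)) ^ αY * (C * t ^ (αX - αY)))
          atTop (𝓝 (1 * (C * 0))) :=
        (hYtail.comp hu).mul ((hpw.const_mul C))
      rw [mul_zero, one_mul] at hcomp
      refine hcomp.congr' ?_
      filter_upwards [eventually_gt_atTop (0:ℝ)] with t ht
      have hupos : 0 < δ * t / ρ := by positivity
      have hbase : cY / (δ * t / ρ) = (cY * ρ / δ) / t := by
        field_simp
      have hBpos : (0:ℝ) < (cY / (δ * t / ρ)) ^ αY :=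
        Real.rpow_pos_of_pos (div_pos hcY hupos) _
      have hratio : C * t ^ (αX - αY) = (cY / (δ * t / ρ)) ^ αY / ((1 - ρ) * cX / t) ^ αX := by
        rw [hC, hbase, Real.div_rpow (by positivity) ht.le,
          Real.div_rpow (mul_nonneg hβ.le hcX.le) ht.le, Real.rpow_sub ht]
        have h1 : (0:ℝ) < t ^ αY := Real.rpow_pos_of_pos ht _
        have h2 : (0:ℝ) < t ^ αX := Real.rpow_pos_of_pos ht _
        have h3 : (0:ℝ) < ((1 - ρ) * cX) ^ αX := Real.rpow_pos_of_pos (mul_pos hβ hcX) _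
        field_simp
      show Q (δ * t / ρ) / (cY / (δ * t / ρ)) ^ αY * (C * t ^ (αX - αY))
          = Q (δ * t / ρ) / ((1 - ρ) * cX / t) ^ αX
      rw [hratio, div_mul_div_comm, mul_comm (Q (δ * t / ρ)) ((cY / (δ * t / ρ)) ^ αY),
        mul_div_mul_left _ _ hBpos.ne']
    -- union bound
    have hub : ∀ᶠ t : ℝ in atTop,
        F t / ((1 - ρ) * cX / t) ^ αX ≤
          P ((1 - δ) * t / (1 - ρ)) / ((1 - ρ) * cX / t) ^ αX
            + Q (δ * t / ρ) / ((1 - ρ) * cX / t) ^ αX := by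
      filter_upwards [eventually_gt_atTop (0:ℝ)] with t ht
      rw [← add_div]
      apply div_le_div_of_nonneg_right ?_ (hDpos t ht).le
      have hsub : {ω | (1 - ρ) * X ω + ρ * Y ω > t} ⊆
          {ω | X ω > (1 - δ) * t / (1 - ρ)} ∪ {ω | Y ω > δ * t / ρ} := by
        intro ω hω
        simp only [Set.mem_setOf_eq, Set.mem_union, gt_iff_lt] at hω ⊢
        by_contra hc
        push_neg at hc
        obtain ⟨h1, h2⟩ := hc
        have e1 : (1 - ρ) * X ω ≤ (1 - δ) * t := by
          have h := mul_le_mul_of_nonneg_left h1 hβ.le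
          rwa [show (1 - ρ) * ((1 - δ) * t / (1 - ρ)) = (1 - δ) * t by
            field_simp] at h
        have e2 : ρ * Y ω ≤ δ * t := by
          have h := mul_le_mul_of_nonneg_left h2 hρ0.le
          rwa [show ρ * (δ * t / ρ) = δ * t by field_simp] at h
        linarith
      calc F t = (ℙ {ω | (1 - ρ) * X ω + ρ * Y ω > t}).toReal := rfl
        _ ≤ (ℙ ({ω | X ω > (1 - δ) * t / (1 - ρ)} ∪ {ω | Y ω > δ * t / ρ})).toReal :=
            ENNReal.toReal_mono (measure_ne_top _ _) (measure_mono hsub)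
        _ ≤ (ℙ {ω | X ω > (1 - δ) * t / (1 - ρ)} + ℙ {ω | Y ω > δ * t / ρ}).toReal :=
            ENNReal.toReal_mono (by finiteness) (measure_union_le _ _)
        _ = P ((1 - δ) * t / (1 - ρ)) + Q (δ * t / ρ) :=
            ENNReal.toReal_add (measure_ne_top _ _) (measure_ne_top _ _)
    have hsum : Tendsto (fun t : ℝ =>
        P ((1 - δ) * t / (1 - ρ)) / ((1 - ρ) * cX / t) ^ αX
          + Q (δ * t / ρ) / ((1 - ρ) * cX / t) ^ αX) atTop (𝓝 (K + 0)) :=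
      hH1.add hH2
    rw [add_zero] at hsum
    filter_upwards [hub, hsum.eventually (eventually_lt_nhds hKa)] with t h1 h2
    exact lt_of_le_of_lt h1 h2
end

section
/- Fix ρ ∈ (0,1) and α > 1. Let X and Y be independent nonnegative random variables with finite means, each having a Pareto tail with the same exponent α and scale parameters c_X and c_Y respectively. Then Z = (1−ρ)X + ρY has a Pareto tail with parameters (c_Z, α) where c_Z = (((1−ρ)c_X)^α + (ρ c_Y)^α)^{1/α}. -/
open MeasureTheory ProbabilityTheory Filter Topology

private lemma ratio_to_prod (α c : ℝ) (hc : 0 < c) (p : ℝ → ℝ)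
    (h : Tendsto (fun x => p x / (c / x) ^ α) atTop (𝓝 1)) :
    Tendsto (fun x => p x * x ^ α) atTop (𝓝 (c ^ α)) := by
  have h2 := h.mul_const (c ^ α)
  rw [one_mul] at h2
  refine h2.congr' ?_
  filter_upwards [eventually_gt_atTop (0:ℝ)] with x hx
  have hxα : (0:ℝ) < x ^ α := Real.rpow_pos_of_pos hx α
  have hcα : (0:ℝ) < c ^ α := Real.rpow_pos_of_pos hc α
  rw [Real.div_rpow hc.le hx.le]
  field_simp

private lemma tail_sum_indep {Ω : Type*} [MeasureSpace Ω] [IsProbabilityMeasure (ℙ : Measure Ω)]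
    (α a b : ℝ) (hα : 0 < α) (ha : 0 < a) (hb : 0 < b)
    (U V : Ω → ℝ) (hU : Measurable U) (hV : Measurable V)
    (hUn : ∀ ω, 0 ≤ U ω) (hVn : ∀ ω, 0 ≤ V ω)
    (hind : IndepFun U V ℙ)
    (hUt : Tendsto (fun t : ℝ => (ℙ {ω | U ω > t}).toReal * t ^ α) atTop (𝓝 a))
    (hVt : Tendsto (fun t : ℝ => (ℙ {ω | V ω > t}).toReal * t ^ α) atTop (𝓝 b)) :
    Tendsto (fun t : ℝ => (ℙ {ω | U ω + V ω > t}).toReal * t ^ α) atTop (𝓝 (a + b)) := by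
  set p : ℝ → ℝ := fun t => (ℙ {ω | U ω > t}).toReal with hp
  set q : ℝ → ℝ := fun t => (ℙ {ω | V ω > t}).toReal with hq
  have hUset : ∀ t : ℝ, {ω | U ω > t} = U ⁻¹' Set.Ioi t := fun t => rfl
  have hVset : ∀ t : ℝ, {ω | V ω > t} = V ⁻¹' Set.Ioi t := fun t => rfl
  have hindep_mul : ∀ s t : ℝ,
      ℙ ({ω | U ω > s} ∩ {ω | V ω > t}) = ℙ {ω | U ω > s} * ℙ {ω | V ω > t} := by
    intro s t
    exact hind.measure_inter_preimage_eq_mul _ _ measurableSet_Ioi measurableSet_Ioi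
  -- nonnegativity of p, q
  have hpnn : ∀ t, 0 ≤ p t := fun t => ENNReal.toReal_nonneg
  have hqnn : ∀ t, 0 ≤ q t := fun t => ENNReal.toReal_nonneg
  have hinv : Tendsto (fun t : ℝ => (t ^ α)⁻¹) atTop (𝓝 0) :=
    (tendsto_rpow_atTop hα).inv_tendsto_atTop
  rw [tendsto_order]
  constructor
  · -- lower bound
    intro c hc
    have hL : Tendsto (fun t : ℝ =>
        p t * t ^ α + q t * t ^ α - (p t * t ^ α) * (q t * t ^ α) * (t ^ α)⁻¹)
        atTop (𝓝 (a + b)) := by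
      have : Tendsto (fun t : ℝ =>
          p t * t ^ α + q t * t ^ α - (p t * t ^ α) * (q t * t ^ α) * (t ^ α)⁻¹)
          atTop (𝓝 (a + b - a * b * 0)) :=
        (hUt.add hVt).sub ((hUt.mul hVt).mul hinv)
      simpa using this
    filter_upwards [hL.eventually (eventually_gt_nhds hc), eventually_gt_atTop (0:ℝ)]
      with t hLt ht
    refine lt_of_lt_of_le hLt ?_
    -- P(union) ≤ P(sum event), inclusion-exclusion
    have hsub : {ω | U ω > t} ∪ {ω | V ω > t} ⊆ {ω | U ω + V ω > t} := by
      rintro ω (hω | hω)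
      · exact lt_of_lt_of_le hω (le_add_of_nonneg_right (hVn ω))
      · exact lt_of_lt_of_le hω (le_add_of_nonneg_left (hUn ω))
    have hIE : ℙ ({ω | U ω > t} ∪ {ω | V ω > t}) + ℙ ({ω | U ω > t} ∩ {ω | V ω > t})
        = ℙ {ω | U ω > t} + ℙ {ω | V ω > t} :=
      measure_union_add_inter _ (hV measurableSet_Ioi)
    have hfin : ∀ s : Set Ω, ℙ s ≠ ⊤ := fun s => measure_ne_top _ _
    have hIE' : (ℙ ({ω | U ω > t} ∪ {ω | V ω > t})).toReal
        = p t + q t - p t * q t := by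
      have := congrArg ENNReal.toReal hIE
      rw [ENNReal.toReal_add (hfin _) (hfin _), ENNReal.toReal_add (hfin _) (hfin _),
        hindep_mul, ENNReal.toReal_mul] at this
      linarith [this]
    have hmono : (ℙ ({ω | U ω > t} ∪ {ω | V ω > t})).toReal
        ≤ (ℙ {ω | U ω + V ω > t}).toReal :=
      ENNReal.toReal_mono (hfin _) (measure_mono hsub)
    have htα : (0:ℝ) < t ^ α := Real.rpow_pos_of_pos ht α
    have key : p t * t ^ α + q t * t ^ α - (p t * t ^ α) * (q t * t ^ α) * (t ^ α)⁻¹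
        = (p t + q t - p t * q t) * t ^ α := by
      field_simp
    rw [key, ← hIE']
    exact mul_le_mul_of_nonneg_right hmono htα.le
  · -- upper bound
    intro c hc
    -- choose δ
    have hcont : Tendsto (fun δ : ℝ => (a + b) * ((1 - δ) ^ α)⁻¹) (𝓝 0) (𝓝 (a + b)) := by
      have h1 : Tendsto (fun δ : ℝ => (1 - δ : ℝ)) (𝓝 0) (𝓝 1) := by
        have := (tendsto_const_nhds (x := (1:ℝ)) (f := 𝓝 (0:ℝ))).sub tendsto_id
        simpa using this
      have h2 : Tendsto (fun δ : ℝ => ((1 - δ : ℝ)) ^ α) (𝓝 0) (𝓝 (1 ^ α)) := by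
        exact (Real.continuousAt_rpow_const 1 α (Or.inl one_ne_zero)).tendsto.comp h1
      rw [Real.one_rpow] at h2
      have := (tendsto_const_nhds (x := (a+b)) (f := 𝓝 (0:ℝ))).mul (h2.inv₀ one_ne_zero)
      simpa using this
    have hmid : a + b < (a + b + c) / 2 := by linarith
    obtain ⟨δ, hδc, hδ0, hδhalf⟩ :
        ∃ δ : ℝ, (a + b) * ((1 - δ) ^ α)⁻¹ < (a + b + c) / 2 ∧ 0 < δ ∧ δ < 1 / 2 := by
      have e1 : ∀ᶠ δ : ℝ in 𝓝[>] 0, (a + b) * ((1 - δ) ^ α)⁻¹ < (a + b + c) / 2 :=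
        ((hcont.eventually (eventually_lt_nhds hmid)).filter_mono nhdsWithin_le_nhds)
      have e2 : ∀ᶠ δ : ℝ in 𝓝[>] (0:ℝ), (0:ℝ) < δ := eventually_mem_nhdsWithin
      have e3 : ∀ᶠ δ : ℝ in 𝓝[>] (0:ℝ), δ < 1/2 :=
        ((gt_mem_nhds (by norm_num : (0:ℝ) < 1/2)).filter_mono nhdsWithin_le_nhds)
      exact ((e1.and e2).and e3).exists.imp (fun δ h => ⟨h.1.1, h.1.2, h.2⟩)
    have hδ1 : 0 < 1 - δ := by linarith
    -- the three tendsto pieces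
    have hmulδ : Tendsto (fun t : ℝ => δ * t) atTop atTop :=
      tendsto_id.const_mul_atTop hδ0
    have hmul1δ : Tendsto (fun t : ℝ => (1 - δ) * t) atTop atTop :=
      tendsto_id.const_mul_atTop hδ1
    have hU1 : Tendsto (fun t : ℝ => p ((1-δ)*t) * t ^ α) atTop (𝓝 (a * ((1-δ)^α)⁻¹)) := by
      have h1 : Tendsto (fun t : ℝ => p ((1-δ)*t) * ((1-δ)*t) ^ α) atTop (𝓝 a) :=
        hUt.comp hmul1δ
      have h2 := h1.mul_const (((1-δ:ℝ)^α)⁻¹)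
      refine h2.congr' ?_
      filter_upwards [eventually_gt_atTop (0:ℝ)] with t ht
      rw [Real.mul_rpow hδ1.le ht.le]
      have : ((1-δ:ℝ)^α) ≠ 0 := (Real.rpow_pos_of_pos hδ1 α).ne'
      field_simp
    have hV1 : Tendsto (fun t : ℝ => q ((1-δ)*t) * t ^ α) atTop (𝓝 (b * ((1-δ)^α)⁻¹)) := by
      have h1 : Tendsto (fun t : ℝ => q ((1-δ)*t) * ((1-δ)*t) ^ α) atTop (𝓝 b) :=
        hVt.comp hmul1δ
      have h2 := h1.mul_const (((1-δ:ℝ)^α)⁻¹)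
      refine h2.congr' ?_
      filter_upwards [eventually_gt_atTop (0:ℝ)] with t ht
      rw [Real.mul_rpow hδ1.le ht.le]
      have : ((1-δ:ℝ)^α) ≠ 0 := (Real.rpow_pos_of_pos hδ1 α).ne'
      field_simp
    have hprod : Tendsto (fun t : ℝ => p (δ*t) * q (δ*t) * t ^ α) atTop (𝓝 0) := by
      have h1 : Tendsto (fun t : ℝ =>
          (p (δ*t) * (δ*t) ^ α) * (q (δ*t) * (δ*t) ^ α) * ((δ^α)⁻¹ * (δ^α)⁻¹ * (t^α)⁻¹))
          atTop (𝓝 (a * b * ((δ^α)⁻¹ * (δ^α)⁻¹ * 0))) :=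
        ((hUt.comp hmulδ).mul (hVt.comp hmulδ)).mul
          (((tendsto_const_nhds).mul tendsto_const_nhds).mul hinv)
      rw [mul_zero, mul_zero] at h1
      refine h1.congr' ?_
      filter_upwards [eventually_gt_atTop (0:ℝ)] with t ht
      have hδα : ((δ:ℝ)^α) ≠ 0 := (Real.rpow_pos_of_pos hδ0 α).ne'
      have htα : ((t:ℝ)^α) ≠ 0 := (Real.rpow_pos_of_pos ht α).ne'
      rw [Real.mul_rpow hδ0.le ht.le]
      field_simp
    have hsum : Tendsto (fun t : ℝ =>
        p ((1-δ)*t) * t ^ α + q ((1-δ)*t) * t ^ α + p (δ*t) * q (δ*t) * t ^ α)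
        atTop (𝓝 ((a + b) * ((1-δ)^α)⁻¹ + 0)) := by
      have := (hU1.add hV1).add hprod
      convert this using 2
      ring
    rw [add_zero] at hsum
    have hlim_lt : (a + b) * ((1-δ)^α)⁻¹ < c := lt_of_lt_of_le hδc (by linarith)
    filter_upwards [hsum.eventually (eventually_lt_nhds hlim_lt), eventually_gt_atTop (0:ℝ)]
      with t hst ht
    refine lt_of_le_of_lt ?_ hst
    -- the inclusion
    have hsub : {ω | U ω + V ω > t} ⊆
        ({ω | U ω > (1-δ)*t} ∪ {ω | V ω > (1-δ)*t}) ∪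
        ({ω | U ω > δ*t} ∩ {ω | V ω > δ*t}) := by
      intro ω hω
      by_cases h1 : U ω > (1-δ)*t
      · exact Or.inl (Or.inl h1)
      by_cases h2 : V ω > (1-δ)*t
      · exact Or.inl (Or.inr h2)
      push_neg at h1 h2
      refine Or.inr ⟨?_, ?_⟩
      · simp only [Set.mem_setOf_eq] at hω ⊢; nlinarith
      · simp only [Set.mem_setOf_eq] at hω ⊢; nlinarith
    have hfin : ∀ s : Set Ω, ℙ s ≠ ⊤ := fun s => measure_ne_top _ _
    have hmeas : (ℙ {ω | U ω + V ω > t}).toReal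
        ≤ p ((1-δ)*t) + q ((1-δ)*t) + p (δ*t) * q (δ*t) := by
      have step : ℙ {ω | U ω + V ω > t} ≤
          ℙ {ω | U ω > (1-δ)*t} + ℙ {ω | V ω > (1-δ)*t} +
          ℙ ({ω | U ω > δ*t} ∩ {ω | V ω > δ*t}) := by
        refine le_trans (measure_mono hsub) ?_
        refine le_trans (measure_union_le _ _) ?_
        exact add_le_add_left (measure_union_le _ _) _
      have := ENNReal.toReal_mono (by
        exact ENNReal.add_ne_top.2 ⟨ENNReal.add_ne_top.2 ⟨hfin _, hfin _⟩, hfin _⟩) step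
      rwa [ENNReal.toReal_add (ENNReal.add_ne_top.2 ⟨hfin _, hfin _⟩) (hfin _),
        ENNReal.toReal_add (hfin _) (hfin _), hindep_mul, ENNReal.toReal_mul] at this
    have htα : (0:ℝ) ≤ t ^ α := (Real.rpow_pos_of_pos ht α).le
    calc (ℙ {ω | U ω + V ω > t}).toReal * t ^ α
        ≤ (p ((1-δ)*t) + q ((1-δ)*t) + p (δ*t) * q (δ*t)) * t ^ α :=
          mul_le_mul_of_nonneg_right hmeas htα
      _ = p ((1-δ)*t) * t ^ α + q ((1-δ)*t) * t ^ α + p (δ*t) * q (δ*t) * t ^ α := by ring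

private lemma scaled_tail {Ω : Type*} [MeasureSpace Ω] [IsProbabilityMeasure (ℙ : Measure Ω)]
    (α c r : ℝ) (hc : 0 < c) (hr : 0 < r) (X : Ω → ℝ)
    (h : Tendsto (fun x : ℝ => (ℙ {ω | X ω > x}).toReal * x ^ α) atTop (𝓝 (c ^ α))) :
    Tendsto (fun t : ℝ => (ℙ {ω | r * X ω > t}).toReal * t ^ α) atTop (𝓝 ((r * c) ^ α)) := by
  have hset : ∀ t : ℝ, {ω | r * X ω > t} = {ω | X ω > t / r} := by
    intro t; ext ω
    simp only [Set.mem_setOf_eq, gt_iff_lt, div_lt_iff₀ hr]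
    rw [mul_comm]
  have hdiv : Tendsto (fun t : ℝ => t / r) atTop atTop :=
    tendsto_id.atTop_div_const hr
  have h1 : Tendsto (fun t : ℝ => (ℙ {ω | X ω > t / r}).toReal * (t / r) ^ α)
      atTop (𝓝 (c ^ α)) := h.comp hdiv
  have h2 := h1.mul_const (r ^ α)
  have h3 : Tendsto (fun t : ℝ => (ℙ {ω | X ω > t / r}).toReal * t ^ α)
      atTop (𝓝 (c ^ α * r ^ α)) := by
    refine h2.congr' ?_
    filter_upwards [eventually_gt_atTop (0:ℝ)] with t ht
    rw [Real.div_rpow ht.le hr.le]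
    have : (r:ℝ) ^ α ≠ 0 := (Real.rpow_pos_of_pos hr α).ne'
    field_simp
  have heq : (r * c) ^ α = c ^ α * r ^ α := by
    rw [Real.mul_rpow hr.le hc.le]; ring
  rw [heq]
  refine h3.congr ?_
  intro t; rw [hset]

/-- Fix `ρ ∈ (0,1)` and `α > 1`. If `X` and `Y` are independent
nonnegative random variables with finite means, each with Pareto tail of exponent `α`
and scales `c_X`, `c_Y`, then `Z = (1−ρ)X + ρY` has a Pareto tail with parameters
`(c_Z, α)` where `c_Z = (((1−ρ)c_X)^α + (ρ c_Y)^α)^{1/α}`. -/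
theorem pareto_tail_convex_combination_equal_exponent
    {Ω : Type*} [MeasureSpace Ω] [IsProbabilityMeasure (ℙ : Measure Ω)]
    (ρ : ℝ) (hρ : ρ ∈ Set.Ioo (0 : ℝ) 1)
    (α cX cY : ℝ) (hα : 1 < α) (hcX : 0 < cX) (hcY : 0 < cY)
    (X Y : Ω → ℝ) (hXmeas : Measurable X) (hYmeas : Measurable Y)
    (hXnonneg : ∀ ω, 0 ≤ X ω) (hYnonneg : ∀ ω, 0 ≤ Y ω)
    (hXint : Integrable X ℙ) (hYint : Integrable Y ℙ)
    (hindep : IndepFun X Y ℙ)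
    (hXtail : Tendsto (fun x : ℝ => (ℙ {ω | X ω > x}).toReal / (cX / x) ^ α)
      atTop (𝓝 1))
    (hYtail : Tendsto (fun x : ℝ => (ℙ {ω | Y ω > x}).toReal / (cY / x) ^ α)
      atTop (𝓝 1)) :
    Tendsto (fun t : ℝ =>
        (ℙ {ω | (1 - ρ) * X ω + ρ * Y ω > t}).toReal /
          (((((1 - ρ) * cX) ^ α + (ρ * cY) ^ α) ^ (1 / α)) / t) ^ α)
      atTop (𝓝 1) := by
  obtain ⟨hρ0, hρ1⟩ := hρ
  have h1ρ : 0 < 1 - ρ := by linarith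
  have hα0 : 0 < α := by linarith
  have hX' := ratio_to_prod α cX hcX _ hXtail
  have hY' := ratio_to_prod α cY hcY _ hYtail
  have hUt := scaled_tail α cX (1 - ρ) hcX h1ρ X hX'
  have hVt := scaled_tail α cY ρ hcY hρ0 Y hY'
  set A : ℝ := ((1 - ρ) * cX) ^ α with hA
  set B : ℝ := (ρ * cY) ^ α with hB
  have hApos : 0 < A := Real.rpow_pos_of_pos (by positivity) α
  have hBpos : 0 < B := Real.rpow_pos_of_pos (by positivity) α
  have hind2 : IndepFun (fun ω => (1 - ρ) * X ω) (fun ω => ρ * Y ω) ℙ :=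
    hindep.comp (measurable_const_mul (1 - ρ)) (measurable_const_mul ρ)
  have hZ := tail_sum_indep α A B hα0 hApos hBpos
    (fun ω => (1 - ρ) * X ω) (fun ω => ρ * Y ω)
    (hXmeas.const_mul _) (hYmeas.const_mul _)
    (fun ω => mul_nonneg h1ρ.le (hXnonneg ω)) (fun ω => mul_nonneg hρ0.le (hYnonneg ω))
    hind2 hUt hVt
  have hABpos : 0 < A + B := by linarith
  have hfinal := hZ.div_const (A + B)
  rw [div_self hABpos.ne'] at hfinal
  refine hfinal.congr' ?_
  filter_upwards [eventually_gt_atTop (0:ℝ)] with t ht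
  have hpow : (((A + B) ^ (1 / α)) / t) ^ α = (A + B) / t ^ α := by
    rw [Real.div_rpow (Real.rpow_nonneg hABpos.le _) ht.le]
    congr 1
    rw [← Real.rpow_mul hABpos.le, one_div, inv_mul_cancel₀ hα0.ne', Real.rpow_one]
  rw [hpow, div_div_eq_mul_div]
end

section
/- For c > 0, α > 1, and n a positive integer, the integral ∫_c^∞ (1 − (1 − (c/x)^α)^n) dx equals −c + n·c·Γ(1 − 1/α)·Γ(n)/Γ(n + 1 − 1/α). -/
open MeasureTheory Real

lemma one_sub_pow_expand (u : ℝ) (n : ℕ) :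
    1 - (1-u)^n = ∑ k ∈ Finset.range n, (-1:ℝ)^k * (n.choose (k+1)) * u^(k+1) := by
  have h : (1-u)^n = ∑ k ∈ Finset.range (n+1), (-u)^k * (n.choose k) := by
    rw [sub_eq_add_neg, add_comm, add_pow]
    simp
  rw [h, Finset.sum_range_succ']
  have : ∀ k ∈ Finset.range n, (-1:ℝ)^k * (n.choose (k+1)) * u^(k+1)
      = -((-u)^(k+1) * (n.choose (k+1))) := by
    intro k hk
    rw [neg_pow, pow_succ]
    ring
  rw [Finset.sum_congr rfl this]
  simp

lemma sum_alt_choose_div (n : ℕ) : ∀ x : ℝ, (∀ j ∈ Finset.range (n+1), x + j ≠ 0) →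
    ∑ k ∈ Finset.range (n+1), (-1:ℝ)^k * (n.choose k) / (x + k)
      = (n.factorial : ℝ) / ∏ j ∈ Finset.range (n+1), (x + j) := by
  induction n with
  | zero => intro x hx; simp
  | succ n ih =>
    intro x hx
    have hx0 : x ≠ 0 := by simpa using hx 0 (by simp)
    have hxa : ∀ j ∈ Finset.range (n+1), x + j ≠ 0 := fun j hj =>
      hx j (Finset.mem_range.mpr (by simp at hj; omega))
    have hxb : ∀ j ∈ Finset.range (n+1), (x+1) + j ≠ 0 := by
      intro j hj
      have := hx (j+1) (by simp at hj ⊢; omega)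
      push_cast at this ⊢
      intro h; apply this; linarith
    have h1 := ih x hxa
    have h2 := ih (x+1) hxb
    have step : ∑ k ∈ Finset.range (n+2), (-1:ℝ)^k * ((n+1).choose k) / (x + k)
        = (∑ k ∈ Finset.range (n+1), (-1:ℝ)^k * (n.choose k) / (x + k))
          - ∑ k ∈ Finset.range (n+1), (-1:ℝ)^k * (n.choose k) / ((x+1) + k) := by
      rw [Finset.sum_range_succ' (fun k => (-1:ℝ)^k * ((n+1).choose k) / (x + k)) (n+1)]
      have e1 : ∀ k ∈ Finset.range (n+1),
          (-1:ℝ)^(k+1) * ((n+1).choose (k+1)) / (x + (↑k + 1))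
            = (-((-1:ℝ)^k * (n.choose k) / ((x+1) + k)))
              + ((-1:ℝ)^(k+1) * (n.choose (k+1)) / (x + (↑k + 1))) := by
        intro k hk
        have hne : x + ((k:ℝ)+1) ≠ 0 := by
          have := hx (k+1) (by simp at hk ⊢; omega)
          push_cast at this; intro h; apply this; linarith
        have hne' : (x+1) + (k:ℝ) ≠ 0 := hxb k hk
        have hcast : (((n+1).choose (k+1) : ℝ)) = (n.choose k : ℝ) + (n.choose (k+1) : ℝ) := by
          rw [Nat.choose_succ_succ]; push_cast; ring
        have hxx : x + ((k:ℝ)+1) = (x+1) + k := by ring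
        rw [hcast, pow_succ]
        field_simp
        rw [hxx]
        ring
      have e2 : ∑ k ∈ Finset.range (n+1), (-1:ℝ)^(k+1) * (n.choose (k+1)) / (x + (↑k + 1))
          = (∑ k ∈ Finset.range (n+1), (-1:ℝ)^k * (n.choose k) / (x + k)) - 1/x := by
        have h := Finset.sum_range_succ' (fun k => (-1:ℝ)^k * (n.choose k) / (x + k)) (n+1)
        rw [Finset.sum_range_succ] at h
        simp only [Nat.choose_succ_self, Nat.cast_zero, Nat.choose_zero_right,
          Nat.cast_one] at h
        push_cast at h ⊢
        linear_combination -h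
      push_cast
      rw [Finset.sum_congr rfl e1, Finset.sum_add_distrib, Finset.sum_neg_distrib, e2]
      simp [Nat.choose_zero_right]
      ring
    rw [step, h1, h2]
    have hP : (∏ j ∈ Finset.range (n+1), (x + j)) ≠ 0 :=
      Finset.prod_ne_zero_iff.mpr hxa
    have hP' : (∏ j ∈ Finset.range (n+1), ((x+1) + j)) ≠ 0 :=
      Finset.prod_ne_zero_iff.mpr hxb
    have hrel : x * ∏ j ∈ Finset.range (n+1), ((x+1) + j)
        = ∏ j ∈ Finset.range (n+1+1), (x + j) := by
      rw [Finset.prod_range_succ' (fun j => x + (j:ℝ)) (n+1)]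
      push_cast
      rw [add_zero, mul_comm]
      exact congrArg (· * x) (Finset.prod_congr rfl fun j _ => by ring)
    have hlast : (∏ j ∈ Finset.range (n+1+1), (x + j))
        = (∏ j ∈ Finset.range (n+1), (x + j)) * (x + ((n:ℝ)+1)) := by
      rw [Finset.prod_range_succ]; push_cast; ring
    have hkey : x * (∏ j ∈ Finset.range (n+1), ((x+1) + (j:ℝ)))
        = (∏ j ∈ Finset.range (n+1), (x + (j:ℝ))) * (x + (n:ℝ) + 1) := by
      rw [hrel, hlast]; ring
    rw [Nat.factorial_succ]
    push_cast
    rw [hlast, show (∏ j ∈ Finset.range (n+1), (x + (j:ℝ))) * (x + ((n:ℝ)+1))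
        = x * (∏ j ∈ Finset.range (n+1), ((x+1) + (j:ℝ))) by rw [hkey]; ring]
    rw [div_sub_div _ _ hP hP', div_eq_div_iff (mul_ne_zero hP hP') (mul_ne_zero hx0 hP')]
    linear_combination ((n.factorial:ℝ) * ∏ j ∈ Finset.range (n+1), ((x+1) + (j:ℝ))) * hkey

lemma Gamma_prod_aux (x : ℝ) (hx : 0 < x) (n : ℕ) :
    Real.Gamma (x + n) = Real.Gamma x * ∏ j ∈ Finset.range n, (x + j) := by
  induction n with
  | zero => simp
  | succ n ih =>
    have hne : x + (n:ℝ) ≠ 0 := by positivity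
    have : x + ((n:ℕ)+1 : ℕ) = (x + n) + 1 := by push_cast; ring
    push_cast
    rw [show x + ((n:ℝ)+1) = (x + n) + 1 by ring, Real.Gamma_add_one hne, ih,
      Finset.prod_range_succ]
    ring

/-- For `c > 0`, `α > 1`, and `n` a positive integer,
`∫_c^∞ (1 − (1 − (c/x)^α)^n) dx = −c + n·c·Γ(1 − 1/α)·Γ(n)/Γ(n + 1 − 1/α)`. -/
theorem integral_pareto_max_tail (c α : ℝ) (hc : 0 < c) (hα : 1 < α)
    (n : ℕ) (hn : 0 < n) :
    ∫ x in Set.Ici c, (1 - (1 - (c / x) ^ α) ^ n) =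
      -c + n * c * Real.Gamma (1 - 1 / α) * Real.Gamma n /
        Real.Gamma (n + 1 - 1 / α) := by
  have hα0 : (0:ℝ) < α := lt_trans one_pos hα
  have hs0 : 0 < 1/α := by positivity
  have hs1 : 1/α < 1 := by rw [div_lt_one hα0]; exact hα
  -- the exponent bound
  have hexp : ∀ k : ℕ, -(α*((k:ℝ)+1)) < -1 := by
    intro k
    have h0 : (0:ℝ) ≤ (k:ℝ) := k.cast_nonneg
    nlinarith
  -- Step 1 : compute the integral as a finite sum
  have key : (∫ x in Set.Ici c, (1 - (1 - (c / x) ^ α) ^ n))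
      = ∑ k ∈ Finset.range n, (-1:ℝ)^k * (n.choose (k+1)) * (c / (α*((k:ℝ)+1) - 1)) := by
    rw [MeasureTheory.integral_Ici_eq_integral_Ioi]
    have hcong : ∫ x in Set.Ioi c, (1 - (1 - (c / x) ^ α) ^ n)
        = ∫ x in Set.Ioi c, (∑ k ∈ Finset.range n,
            ((-1:ℝ)^k * (n.choose (k+1)) * c^(α*((k:ℝ)+1))) * x ^ (-(α*((k:ℝ)+1)))) := by
      apply MeasureTheory.setIntegral_congr_fun measurableSet_Ioi
      intro x hx
      have hx0 : (0:ℝ) < x := lt_trans hc hx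
      dsimp only
      rw [one_sub_pow_expand]
      apply Finset.sum_congr rfl
      intro k hk
      have h1 : ((c/x) ^ α) ^ (k+1) = (c/x) ^ (α * ((k:ℝ)+1)) := by
        rw [← Real.rpow_natCast ((c/x)^α) (k+1), ← Real.rpow_mul (by positivity)]
        push_cast
        ring_nf
      rw [h1, Real.div_rpow hc.le hx0.le, Real.rpow_neg hx0.le]
      field_simp
    rw [hcong, MeasureTheory.integral_finset_sum _ (fun k _ =>
      ((integrableOn_Ioi_rpow_of_lt (hexp k) hc).const_mul _))]
    apply Finset.sum_congr rfl
    intro k hk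
    rw [MeasureTheory.integral_const_mul, integral_Ioi_rpow_of_lt (hexp k) hc]
    have hne : α*((k:ℝ)+1) - 1 ≠ 0 := by
      have := hexp k; intro h; nlinarith
    have hne' : -(α*((k:ℝ)+1)) + 1 ≠ 0 := by intro h; apply hne; linarith
    have hcc : c ^ (α*((k:ℝ)+1)) * c ^ (-(α*((k:ℝ)+1)) + 1) = c := by
      rw [← Real.rpow_add hc]
      norm_num
    field_simp
    linear_combination ((n.choose (k+1)) * (-(α*((k:ℝ)+1)) + 1)) * hcc
  -- Step 2 : evaluate the finite sum
  set Q : ℝ := ∏ j ∈ Finset.range n, (1 - 1/α + j) with hQdef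
  have hQpos : 0 < Q := Finset.prod_pos (fun j _ => by
    have : (0:ℝ) ≤ (j:ℝ) := Nat.cast_nonneg j
    linarith)
  have hsum : ∑ k ∈ Finset.range n, (-1:ℝ)^k * (n.choose (k+1)) * (c / (α*((k:ℝ)+1) - 1))
      = -c + c * (n.factorial : ℝ) / Q := by
    have hxj : ∀ j ∈ Finset.range (n+1), -(1/α) + (j:ℝ) ≠ 0 := by
      intro j hj
      rcases Nat.eq_zero_or_pos j with h0 | hpos
      · subst h0
        simpa using ne_of_lt (show -(1/α) < 0 by linarith)
      · have h1 : (1:ℝ) ≤ (j:ℝ) := by exact_mod_cast hpos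
        intro h
        linarith
    have S := sum_alt_choose_div n (-(1/α)) hxj
    rw [Finset.sum_range_succ' (fun k => (-1:ℝ)^k * (n.choose k) / (-(1/α) + k)) n,
      Finset.prod_range_succ' (fun j => -(1/α) + (j:ℝ)) n] at S
    simp only [pow_zero, Nat.choose_zero_right, Nat.cast_one, Nat.cast_zero, add_zero,
      one_mul] at S
    push_cast at S
    have hQeq : (∏ j ∈ Finset.range n, (-(1/α) + ((j:ℝ)+1))) = Q :=
      Finset.prod_congr rfl (fun j _ => by ring)
    rw [hQeq] at S
    have hterm : ∀ k ∈ Finset.range n, (-1:ℝ)^k * (n.choose (k+1)) * (c/(α*((k:ℝ)+1)-1))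
        = (-(c/α)) * ((-1:ℝ)^(k+1) * (n.choose (k+1)) / (-(1/α) + ((k:ℝ)+1))) := by
      intro k hk
      have hk0 : (0:ℝ) ≤ (k:ℝ) := Nat.cast_nonneg k
      have h1 : α*((k:ℝ)+1) - 1 ≠ 0 := by nlinarith
      have h2 : -(1/α) + ((k:ℝ)+1) ≠ 0 := by
        have : 1/α < (k:ℝ)+1 := by linarith
        intro h; linarith
      have h3 : α * (α*((k:ℝ)+1)-1) ≠ 0 := mul_ne_zero (ne_of_gt hα0) h1
      rw [pow_succ]
      field_simp
      rw [show -1 + α*((k:ℝ)+1) = α*((k:ℝ)+1) - 1 by ring, mul_div_cancel_right₀ _ h1]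
    rw [Finset.sum_congr rfl hterm, ← Finset.mul_sum]
    have hA : α ≠ 0 := ne_of_gt hα0
    have hQ0 : Q ≠ 0 := ne_of_gt hQpos
    rw [show (1:ℝ) / -(1/α) = -α by field_simp,
      show (n.factorial:ℝ) / (Q * -(1/α)) = -(α * (n.factorial:ℝ) / Q) by
        field_simp] at S
    have hS' : ∑ x ∈ Finset.range n,
        (-1:ℝ)^(x+1) * (n.choose (x+1)) / (-(1/α) + ((x:ℝ) + 1))
        = α - α * (n.factorial:ℝ)/Q := by linarith [S]
    rw [hS']
    field_simp
    ring
  -- Step 3 : identify with the Gamma expression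
  rw [key, hsum]
  have hx1 : (0:ℝ) < 1 - 1/α := by linarith
  have hG : Real.Gamma ((n:ℝ) + 1 - 1/α) = Real.Gamma (1 - 1/α) * Q := by
    rw [show (n:ℝ) + 1 - 1/α = (1 - 1/α) + n by ring, Gamma_prod_aux _ hx1, hQdef]
  have hn0 : ((n:ℝ)) ≠ 0 := by
    exact_mod_cast hn.ne'
  have hGfact : (n:ℝ) * Real.Gamma n = (n.factorial : ℝ) := by
    rw [← Real.Gamma_add_one hn0]
    exact_mod_cast Real.Gamma_nat_eq_factorial n
  have hGpos : 0 < Real.Gamma (1 - 1/α) := Real.Gamma_pos_of_pos hx1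
  have hQ0 : Q ≠ 0 := ne_of_gt hQpos
  rw [hG]
  have heq : (n:ℝ) * c * Real.Gamma (1-1/α) * Real.Gamma n / (Real.Gamma (1-1/α) * Q)
      = c * (n.factorial : ℝ) / Q := by
    rw [div_eq_div_iff (mul_ne_zero (ne_of_gt hGpos) hQ0) hQ0, ← hGfact]
    ring
  rw [heq]
end

section
/- For c̄ > 0, λ > 0, n a positive integer, and s = ln(c̄)/λ, the integral ∫_s^∞ (1 − (1 − c̄·exp(−λx))^n) dx equals H_n/λ, where H_n = 1 + 1/2 + ... + 1/n is the n-th harmonic number. -/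
open MeasureTheory Real

/-- For `c̄ > 0`, `λ > 0`, `n` a positive integer, and
`s = ln(c̄)/λ`, one has `∫_s^∞ (1 − (1 − c̄·exp(−λx))^n) dx = H_n/λ`, where `H_n`
is the `n`-th harmonic number. -/
theorem integral_exponential_max_tail (cbar lam : ℝ) (hc : 0 < cbar) (hlam : 0 < lam)
    (n : ℕ) (hn : 0 < n) :
    ∫ x in Set.Ici (Real.log cbar / lam), (1 - (1 - cbar * Real.exp (-lam * x)) ^ n) =
      (∑ k ∈ Finset.range n, (1 : ℝ) / (k + 1)) / lam := by
  set s : ℝ := Real.log cbar / lam with hs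
  have hlam' : lam ≠ 0 := ne_of_gt hlam
  have hus : cbar * Real.exp (-lam * s) = 1 := by
    rw [hs]
    rw [show -lam * (Real.log cbar / lam) = -Real.log cbar by field_simp]
    rw [Real.exp_neg, Real.exp_log hc]
    field_simp
  set F : ℝ → ℝ := fun x => ∑ k ∈ Finset.range n,
    (1 - cbar * Real.exp (-lam * x)) ^ (k + 1) / (lam * (k + 1)) with hF
  have hderiv : ∀ x ∈ Set.Ici s,
      HasDerivAt F (1 - (1 - cbar * Real.exp (-lam * x)) ^ n) x := by
    intro x _
    have hu : HasDerivAt (fun y => 1 - cbar * Real.exp (-lam * y))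
        (lam * (cbar * Real.exp (-lam * x))) x := by
      have h1 : HasDerivAt (fun y : ℝ => -lam * y) (-lam) x := by
        simpa using (hasDerivAt_id x).const_mul (-lam)
      have h2 := (Real.hasDerivAt_exp (-lam * x)).comp x h1
      have h3 := ((h2.const_mul cbar).const_sub 1)
      refine h3.congr_deriv (Eq.symm ?_)
      ring
    have hterm : ∀ k ∈ Finset.range n,
        HasDerivAt (fun y => (1 - cbar * Real.exp (-lam * y)) ^ (k + 1) / (lam * (k + 1)))
          (cbar * Real.exp (-lam * x) * (1 - cbar * Real.exp (-lam * x)) ^ k) x := by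
      intro k _
      have h4 := (hu.pow (k + 1)).div_const (lam * (k + 1))
      refine h4.congr_deriv (Eq.symm ?_)
      simp only [Nat.add_sub_cancel, Nat.cast_add, Nat.cast_one]
      have hk : ((k : ℝ) + 1) ≠ 0 := by positivity
      field_simp
    have hsum := HasDerivAt.fun_sum hterm
    refine hsum.congr_deriv (Eq.symm ?_)
    set u := cbar * Real.exp (-lam * x) with hu'
    have : ∀ k, u * (1 - u) ^ k = (1 - u) ^ k - (1 - u) ^ (k + 1) := by
      intro k; ring
    calc 1 - (1 - u) ^ n = (1 - u) ^ 0 - (1 - u) ^ n := by simp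
    _ = ∑ k ∈ Finset.range n, ((1 - u) ^ k - (1 - u) ^ (k + 1)) := by
        rw [Finset.sum_range_sub' (fun k => (1 - u) ^ k)]
    _ = ∑ k ∈ Finset.range n, u * (1 - u) ^ k := by
        exact Finset.sum_congr rfl fun k _ => (this k).symm
  have hnonneg : ∀ x ∈ Set.Ioi s, 0 ≤ 1 - (1 - cbar * Real.exp (-lam * x)) ^ n := by
    intro x hx
    have hxs : s < x := hx
    have hult : cbar * Real.exp (-lam * x) ≤ 1 := by
      calc cbar * Real.exp (-lam * x) ≤ cbar * Real.exp (-lam * s) := by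
            apply mul_le_mul_of_nonneg_left _ hc.le
            exact Real.exp_le_exp.2 (by nlinarith)
      _ = 1 := hus
    have hpos : 0 < cbar * Real.exp (-lam * x) := by positivity
    have h1 : 0 ≤ 1 - cbar * Real.exp (-lam * x) := by linarith
    have h2 : 1 - cbar * Real.exp (-lam * x) ≤ 1 := by linarith
    have := pow_le_one₀ h1 h2 (n := n)
    linarith
  have htend : Filter.Tendsto F Filter.atTop
      (nhds (∑ k ∈ Finset.range n, (1 : ℝ) / (lam * (k + 1)))) := by
    have hu0 : Filter.Tendsto (fun x : ℝ => cbar * Real.exp (-lam * x)) Filter.atTop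
        (nhds 0) := by
      rw [show (0 : ℝ) = cbar * 0 by ring]
      apply Filter.Tendsto.const_mul
      apply Real.tendsto_exp_atBot.comp
      exact Filter.Tendsto.const_mul_atTop_of_neg (neg_neg_iff_pos.mpr hlam) Filter.tendsto_id
    apply tendsto_finset_sum
    intro k _
    have : Filter.Tendsto (fun x : ℝ => (1 - cbar * Real.exp (-lam * x)) ^ (k + 1))
        Filter.atTop (nhds ((1 - 0) ^ (k + 1))) :=
      ((tendsto_const_nhds.sub hu0).pow (k + 1))
    simpa using this.div_const (lam * (k + 1))
  have key := MeasureTheory.integral_Ioi_of_hasDerivAt_of_nonneg' hderiv hnonneg htend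
  have hFs : F s = 0 := by
    have : cbar * Real.exp (-(lam * s)) = 1 := by rw [← neg_mul]; exact hus
    simp [hF, this]
  rw [MeasureTheory.integral_Ici_eq_integral_Ioi, key, hFs, sub_zero,
    Finset.sum_div]
  apply Finset.sum_congr rfl
  intro k _
  rw [div_div]
  ring_nf
end

section
/- Fix λ > 0, c > 0. For each k, let φ_{(k:k)} denote the maximum of k i.i.d. nonnegative random variables with finite mean and distribution having an exponential tail with parameters (c, λ). Define Φ_n = (1/n) Σ_{k=1}^n E[φ_{(k:k)}]. Then lim_{n→∞} Φ_n / (ln n / λ) = 1. -/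
open MeasureTheory ProbabilityTheory Filter Topology

section AuxiliaryLemmas

open Set
open scoped ENNReal

namespace AverageExpectedMaximaAux

lemma sum_log_le (n : ℕ) : ∑ k ∈ Finset.Icc 1 n, Real.log k ≤ n * Real.log n := by
  calc ∑ k ∈ Finset.Icc 1 n, Real.log k ≤ ∑ k ∈ Finset.Icc 1 n, Real.log n := by
        apply Finset.sum_le_sum
        intro k hk
        simp only [Finset.mem_Icc] at hk
        exact Real.log_le_log (by exact_mod_cast hk.1) (by exact_mod_cast hk.2)
    _ = n * Real.log n := by
        rw [Finset.sum_const, Nat.card_Icc]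
        simp [nsmul_eq_mul]

lemma le_sum_log (n : ℕ) : n * Real.log n - n ≤ ∑ k ∈ Finset.Icc 1 n, Real.log k := by
  induction n with
  | zero => simp
  | succ n ih =>
    rw [Finset.sum_Icc_succ_top (by omega)]
    have h1 : (n:ℝ) * Real.log (n+1) ≤ n * Real.log n + 1 := by
      rcases Nat.eq_zero_or_pos n with h | h
      · simp [h]
      have hn : (0:ℝ) < n := by exact_mod_cast h
      have : Real.log ((n+1)/n) ≤ (n+1)/n - 1 := by
        apply Real.log_le_sub_one_of_pos; positivity
      rw [Real.log_div (by positivity) (by positivity)] at this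
      have h2 : (n:ℝ) * (Real.log (n+1) - Real.log n) ≤ n * (1/n) := by
        apply mul_le_mul_of_nonneg_left _ hn.le
        calc Real.log (n+1) - Real.log n ≤ (n+1)/n - 1 := this
          _ = 1/n := by field_simp; ring
      rw [mul_one_div, div_self hn.ne'] at h2
      nlinarith
    push_cast
    nlinarith

lemma exp_integral_Ioi {lam : ℝ} (hlam : 0 < lam) (b : ℝ) :
    ∫ x in Ioi b, Real.exp (-lam * x) = Real.exp (-lam * b) / lam := by
  have h : ∀ x ∈ Ici b, HasDerivAt (fun x => -Real.exp (-lam * x) / lam)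
      (Real.exp (-lam * x)) x := by
    intro x _
    have h1 : HasDerivAt (fun x : ℝ => -lam * x) (-lam) x := by simpa using (hasDerivAt_id x).const_mul (-lam)
    have h2 := (Real.hasDerivAt_exp (-lam * x)).comp x h1
    have h3 := (h2.neg).div_const lam
    refine h3.congr_deriv ?_
    rw [div_eq_iff hlam.ne']; ring
  have htend : Tendsto (fun x => -Real.exp (-lam * x) / lam) atTop (nhds 0) := by
    have : Tendsto (fun x : ℝ => -lam * x) atTop atBot :=
      Tendsto.const_mul_atTop_of_neg (by linarith) tendsto_id
    have := (Real.tendsto_exp_atBot.comp this).neg.div_const lam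
    simpa using this
  have := MeasureTheory.integral_Ioi_of_hasDerivAt_of_tendsto' h
    (exp_neg_integrableOn_Ioi b hlam) htend
  rw [this]; ring

lemma exp_lintegral_Ioi {lam : ℝ} (hlam : 0 < lam) (b : ℝ) :
    ∫⁻ x in Ioi b, ENNReal.ofReal (Real.exp (-lam * x)) = ENNReal.ofReal (Real.exp (-lam * b) / lam) := by
  rw [← exp_integral_Ioi hlam b,
    ofReal_integral_eq_lintegral_ofReal ((exp_neg_integrableOn_Ioi b hlam)) (by filter_upwards with x using (Real.exp_pos _).le)]

lemma max_meas {Ω : Type*} [MeasureSpace Ω] (φ : ℕ → Ω → ℝ) (hmeas : ∀ i, Measurable (φ i))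
    (k : ℕ) (hk : 1 ≤ k) : Measurable (fun ω => ⨆ i : Fin k, φ (i : ℕ) ω) := by
  have : Nonempty (Fin k) := ⟨⟨0, hk⟩⟩
  have h : (fun ω => ⨆ i : Fin k, φ (i : ℕ) ω)
      = (Finset.univ.sup' Finset.univ_nonempty (fun i : Fin k => φ (i : ℕ))) := by
    funext ω
    rw [Finset.sup'_apply, Finset.sup'_univ_eq_ciSup]
  rw [h]
  exact Finset.measurable_sup' _ (fun n _ => hmeas n)

lemma tail_max {Ω : Type*} [MeasureSpace Ω] [IsProbabilityMeasure (ℙ : Measure Ω)]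
    (φ : ℕ → Ω → ℝ) (hmeas : ∀ i, Measurable (φ i))
    (hindep : iIndepFun φ ℙ)
    (hident : ∀ i, IdentDistrib (φ i) (φ 0) ℙ ℙ)
    (k : ℕ) (hk : 1 ≤ k) (x : ℝ) :
    ℙ {ω | x < ⨆ i : Fin k, φ (i : ℕ) ω} = 1 - (ℙ {ω | φ 0 ω ≤ x})^k := by
  have : Nonempty (Fin k) := ⟨⟨0, hk⟩⟩
  have hbdd : ∀ ω, BddAbove (Set.range fun i : Fin k => φ (i : ℕ) ω) :=
    fun ω => (Set.finite_range _).bddAbove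
  have hset : {ω | (⨆ i : Fin k, φ (i : ℕ) ω) ≤ x} = ⋂ i ∈ Finset.range k, φ i ⁻¹' Iic x := by
    ext ω
    simp only [Set.mem_setOf_eq, Set.mem_iInter, Set.mem_preimage, Set.mem_Iic,
      Finset.mem_range]
    rw [ciSup_le_iff (hbdd ω)]
    constructor
    · intro h i hi; exact h ⟨i, hi⟩
    · intro h i; exact h i i.2
  have hprod : ℙ {ω | (⨆ i : Fin k, φ (i : ℕ) ω) ≤ x} = (ℙ {ω | φ 0 ω ≤ x})^k := by
    rw [hset, hindep.meas_biInter (fun i _ => ⟨Iic x, measurableSet_Iic, rfl⟩)]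
    have : ∀ i, ℙ (φ i ⁻¹' Iic x) = ℙ {ω | φ 0 ω ≤ x} := by
      intro i
      have := (hident i).measure_mem_eq (s := Iic x) measurableSet_Iic
      simpa [Set.preimage] using this
    rw [Finset.prod_congr rfl (fun i _ => this i)]
    simp
  have hcompl : {ω | x < ⨆ i : Fin k, φ (i : ℕ) ω}
      = {ω | (⨆ i : Fin k, φ (i : ℕ) ω) ≤ x}ᶜ := by
    ext ω; simp [not_le]
  rw [hcompl, prob_compl_eq_one_sub, hprod]
  exact (measurableSet_le (max_meas φ hmeas k hk) measurable_const)


section ProbabilityAux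
variable {Ω : Type*} [MeasureSpace Ω] [IsProbabilityMeasure (ℙ : Measure Ω)]
  (φ : ℕ → Ω → ℝ)

-- union bound
lemma union_bound (hident : ∀ i, IdentDistrib (φ i) (φ 0) ℙ ℙ) (k : ℕ) (hk : 1 ≤ k) (t : ℝ) :
    ℙ {ω | t < ⨆ i : Fin k, φ (i : ℕ) ω} ≤ k * ℙ {ω | t < φ 0 ω} := by
  have : Nonempty (Fin k) := ⟨⟨0, hk⟩⟩
  have hbdd : ∀ ω, BddAbove (Set.range fun i : Fin k => φ (i : ℕ) ω) :=
    fun ω => (Set.finite_range _).bddAbove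
  have hset : {ω | t < ⨆ i : Fin k, φ (i : ℕ) ω} = ⋃ i : Fin k, {ω | t < φ (i:ℕ) ω} := by
    ext ω
    simp only [Set.mem_setOf_eq, Set.mem_iUnion]
    exact lt_ciSup_iff (hbdd ω)
  rw [hset]
  calc ℙ (⋃ i : Fin k, {ω | t < φ (i:ℕ) ω}) ≤ ∑ i : Fin k, ℙ {ω | t < φ (i:ℕ) ω} :=
        measure_iUnion_fintype_le _ _
    _ = ∑ _i : Fin k, ℙ {ω | t < φ 0 ω} := by
        refine Finset.sum_congr rfl fun i _ => ?_
        have := (hident i).measure_mem_eq (s := Ioi t) measurableSet_Ioi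
        simpa [Set.preimage, Set.Ioi] using this
    _ = k * ℙ {ω | t < φ 0 ω} := by simp [Finset.card_univ]

-- I_k upper bound, assuming the union bound and a tail estimate
lemma Ik_upper {lam C x₀ : ℝ} (hlam : 0 < lam) (hC : 0 < C) (hx₀ : 0 ≤ x₀)
    (φ : ℕ → Ω → ℝ)
    (hub : ∀ (k : ℕ), 1 ≤ k → ∀ t : ℝ,
      ℙ {ω | t < ⨆ i : Fin k, φ (i : ℕ) ω} ≤ k * ℙ {ω | t < φ 0 ω})
    (hG : ∀ x : ℝ, x₀ ≤ x → ℙ {ω | x < φ 0 ω} ≤ ENNReal.ofReal (C * Real.exp (-lam * x)))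
    (k : ℕ) (hk : 1 ≤ k) :
    ∫⁻ t in Ioi 0, ℙ {ω | t < ⨆ i : Fin k, φ (i : ℕ) ω}
      ≤ ENNReal.ofReal (Real.log k / lam + (x₀ + C / lam)) := by
  set b : ℝ := x₀ + Real.log k / lam with hb
  have hlogk : 0 ≤ Real.log k := Real.log_nonneg (by exact_mod_cast hk)
  have hbx₀ : x₀ ≤ b := by rw [hb]; nlinarith [div_nonneg hlogk hlam.le]
  have hb0 : 0 ≤ b := le_trans hx₀ hbx₀
  have hsplit : (Ioi (0:ℝ)) = Ioc 0 b ∪ Ioi b := (Ioc_union_Ioi_eq_Ioi hb0).symm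
  rw [hsplit, lintegral_union measurableSet_Ioi Ioc_disjoint_Ioi_same]
  have h1 : ∫⁻ t in Ioc (0:ℝ) b, ℙ {ω | t < ⨆ i : Fin k, φ (i : ℕ) ω} ≤ ENNReal.ofReal b := by
    calc ∫⁻ t in Ioc (0:ℝ) b, ℙ {ω | t < ⨆ i : Fin k, φ (i : ℕ) ω}
        ≤ ∫⁻ _t in Ioc (0:ℝ) b, 1 := by
          exact lintegral_mono fun t => prob_le_one
      _ = ENNReal.ofReal b := by
          simp [Real.volume_Ioc]
  have hexpm : Measurable fun t : ℝ => Real.exp (-lam * t) :=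
    Real.measurable_exp.comp (measurable_id.const_mul (-lam))
  have h2 : ∫⁻ t in Ioi b, ℙ {ω | t < ⨆ i : Fin k, φ (i : ℕ) ω} ≤ ENNReal.ofReal (C / lam) := by
    calc ∫⁻ t in Ioi b, ℙ {ω | t < ⨆ i : Fin k, φ (i : ℕ) ω}
        ≤ ∫⁻ t in Ioi b, (k : ℝ≥0∞) * ENNReal.ofReal (C * Real.exp (-lam * t)) := by
          refine setLIntegral_mono (measurable_const.mul (hexpm.const_mul C).ennreal_ofReal) fun t ht => ?_
          exact le_trans (hub k hk t) (mul_le_mul_right (hG t (le_trans hbx₀ (le_of_lt ht))) _)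
      _ = (k : ℝ≥0∞) * ENNReal.ofReal C * ENNReal.ofReal (Real.exp (-lam * b) / lam) := by
          rw [lintegral_const_mul _ (hexpm.const_mul C).ennreal_ofReal]
          simp_rw [ENNReal.ofReal_mul hC.le]
          rw [lintegral_const_mul _ hexpm.ennreal_ofReal, exp_lintegral_Ioi hlam b, mul_assoc]
      _ ≤ ENNReal.ofReal (C / lam) := by
          have hk0 : (0:ℝ) < k := by exact_mod_cast hk
          rw [show ((k : ℝ≥0∞)) = ENNReal.ofReal (k:ℝ) by simp,
            ← ENNReal.ofReal_mul (by positivity), ← ENNReal.ofReal_mul (by positivity)]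
          apply ENNReal.ofReal_le_ofReal
          have hexp : Real.exp (-lam * b) = Real.exp (-lam * x₀) / k := by
            rw [hb]
            rw [show -lam * (x₀ + Real.log k / lam) = -lam * x₀ + -(Real.log k) by field_simp; ring]
            rw [Real.exp_add, Real.exp_neg, Real.exp_log hk0]
            ring
          rw [hexp]
          have h1 : Real.exp (-lam * x₀) ≤ 1 := Real.exp_le_one_iff.mpr (by nlinarith)
          rw [div_div]
          rw [show (k:ℝ) * C * (Real.exp (-lam * x₀) / (k * lam)) = C * Real.exp (-lam*x₀) / lam by field_simp]
          gcongr
          nlinarith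
  calc _ ≤ ENNReal.ofReal b + ENNReal.ofReal (C / lam) := add_le_add h1 h2
    _ = ENNReal.ofReal (Real.log k / lam + (x₀ + C / lam)) := by
        rw [← ENNReal.ofReal_add hb0 (by positivity)]
        rw [hb]; ring_nf

lemma Ik_lower {lam δ c' x₁ : ℝ} (hlam : 0 < lam) (hδ : 0 < δ) (hδ1 : δ < 1)
    (hc' : 0 < c') (hx₁ : 0 ≤ x₁)
    (φ : ℕ → Ω → ℝ) (hmeas : ∀ i, Measurable (φ i))
    (htm : ∀ (k : ℕ), 1 ≤ k → ∀ t : ℝ,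
      ℙ {ω | t < ⨆ i : Fin k, φ (i : ℕ) ω} = 1 - (ℙ {ω | φ 0 ω ≤ t})^k)
    (hGlow : ∀ x : ℝ, x₁ ≤ x → c' * Real.exp (-lam * x) ≤ (ℙ {ω | x < φ 0 ω}).toReal)
    (k : ℕ) (hk : 1 ≤ k) :
    ENNReal.ofReal ((1 - δ) * (Real.log k / lam - (x₁ + |Real.log (c' / Real.log (1/δ))| / lam)))
      ≤ ∫⁻ t in Ioi 0, ℙ {ω | t < ⨆ i : Fin k, φ (i : ℕ) ω} := by
  set m : ℝ := Real.log (1/δ) with hm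
  have hm0 : 0 < m := Real.log_pos (by rw [lt_div_iff₀ hδ]; linarith)
  have hexpm : Real.exp (-m) = δ := by
    rw [hm, ← Real.log_inv, Real.exp_log (by positivity)]
    simp
  set B : ℝ := x₁ + |Real.log (c' / m)| / lam with hB
  have hk0 : (0:ℝ) < k := by exact_mod_cast hk
  set a : ℝ := Real.log ((k : ℝ) * (c' / m)) / lam with ha
  have hlogsplit : Real.log ((k:ℝ) * (c'/m)) = Real.log k + Real.log (c'/m) :=
    Real.log_mul (by positivity) (by positivity)
  have hlogky : Real.log k / lam = a - Real.log (c'/m) / lam := by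
    rw [ha, hlogsplit]; ring
  have habs : -(Real.log (c'/m)) / lam ≤ |Real.log (c'/m)| / lam :=
    (div_le_div_iff_of_pos_right hlam).mpr (neg_le_abs _)
  by_cases hax : a ≤ x₁
  · have h1 : Real.log k / lam - B ≤ 0 := by
      rw [hlogky, hB]
      have h2 : -(Real.log (c'/m) / lam) ≤ |Real.log (c'/m)| / lam := by
        rw [← neg_div]; exact habs
      linarith
    have : (1 - δ) * (Real.log k / lam - B) ≤ 0 :=
      mul_nonpos_of_nonneg_of_nonpos (by linarith) h1
    rw [ENNReal.ofReal_eq_zero.mpr this]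
    exact bot_le
  · push_neg at hax
    have hpoint : ∀ t ∈ Ioc x₁ a, ENNReal.ofReal (1 - δ) ≤ ℙ {ω | t < ⨆ i : Fin k, φ (i : ℕ) ω} := by
      intro t ht
      set q : ℝ≥0∞ := ℙ {ω | φ 0 ω ≤ t} with hq
      have hq1 : q ≤ 1 := prob_le_one
      set p : ℝ := (ℙ {ω | t < φ 0 ω}).toReal with hp
      have hp0 : 0 ≤ p := ENNReal.toReal_nonneg
      have hqp : q.toReal = 1 - p := by
        have hcompl : {ω | φ 0 ω ≤ t} = {ω | t < φ 0 ω}ᶜ := by ext ω; simp [not_lt]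
        rw [hq, hcompl, prob_compl_eq_one_sub (measurableSet_lt measurable_const (hmeas 0)),
          ENNReal.toReal_sub_of_le prob_le_one ENNReal.one_ne_top]
        simp [hp]
      have hplow : m / k ≤ p := by
        have hta : Real.exp (-lam * a) ≤ Real.exp (-lam * t) :=
          Real.exp_le_exp.mpr (by nlinarith [ht.2])
        have hea : Real.exp (-lam * a) = ((k:ℝ) * (c'/m))⁻¹ := by
          rw [ha, show -lam * (Real.log ((k:ℝ)*(c'/m))/lam) = -(Real.log ((k:ℝ)*(c'/m))) by
            field_simp]
          rw [Real.exp_neg, Real.exp_log (by positivity)]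
        calc m / k = c' * ((k:ℝ)*(c'/m))⁻¹ := by field_simp
          _ = c' * Real.exp (-lam * a) := by rw [hea]
          _ ≤ c' * Real.exp (-lam * t) := mul_le_mul_of_nonneg_left hta hc'.le
          _ ≤ p := hGlow t ht.1.le
      have hpow : (1 - p)^k ≤ δ := by
        have h1 : (1 - p) ≤ Real.exp (-p) := by
          have := Real.add_one_le_exp (-p); linarith
        have hp1 : 1 - p ≥ 0 := by
          have : q.toReal ≥ 0 := ENNReal.toReal_nonneg
          linarith [hqp ▸ this]
        have h2 : (1 - p)^k ≤ (Real.exp (-p))^k := pow_le_pow_left₀ hp1 h1 k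
        rw [← Real.exp_nat_mul] at h2
        have h3 : Real.exp ((k:ℝ) * (-p)) ≤ Real.exp (-m) := by
          apply Real.exp_le_exp.mpr
          rw [div_le_iff₀ hk0] at hplow
          nlinarith
        rw [hexpm] at h3
        linarith
      have hqk : (q^k).toReal ≤ δ := by
        rw [ENNReal.toReal_pow, hqp]
        exact hpow
      rw [htm k hk t]
      apply ENNReal.ofReal_le_of_le_toReal
      rw [ENNReal.toReal_sub_of_le (pow_le_one' hq1 k) ENNReal.one_ne_top]
      simp only [ENNReal.toReal_one]
      linarith
    have hanti : Antitone (fun t : ℝ => ℙ {ω | t < ⨆ i : Fin k, φ (i : ℕ) ω}) := by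
      intro s t hst
      exact measure_mono (fun ω hw => lt_of_le_of_lt hst hw)
    calc ENNReal.ofReal ((1 - δ) * (Real.log k / lam - B))
        ≤ ENNReal.ofReal ((1 - δ) * (a - x₁)) := by
          apply ENNReal.ofReal_le_ofReal
          apply mul_le_mul_of_nonneg_left _ (by linarith)
          have h2 : -(Real.log (c'/m) / lam) ≤ |Real.log (c'/m)| / lam := by
            rw [← neg_div]; exact habs
          rw [hlogky, hB]; linarith
      _ = ENNReal.ofReal (1 - δ) * volume (Ioc x₁ a) := by
          rw [Real.volume_Ioc, ← ENNReal.ofReal_mul (by linarith)]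
      _ = ∫⁻ _t in Ioc x₁ a, ENNReal.ofReal (1 - δ) := by
          rw [setLIntegral_const]
      _ ≤ ∫⁻ t in Ioc x₁ a, ℙ {ω | t < ⨆ i : Fin k, φ (i : ℕ) ω} :=
          setLIntegral_mono hanti.measurable hpoint
      _ ≤ ∫⁻ t in Ioi 0, ℙ {ω | t < ⨆ i : Fin k, φ (i : ℕ) ω} := by
          apply lintegral_mono_set
          intro t ht
          exact lt_of_le_of_lt hx₁ ht.1

end ProbabilityAux
end AverageExpectedMaximaAux
end AuxiliaryLemmas

open AverageExpectedMaximaAux Set in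
open scoped ENNReal in
set_option maxHeartbeats 1000000 in
/-- Fix `λ > 0`, `c > 0`. Let `φ_{(k:k)}` denote the maximum of `k`
i.i.d. nonnegative random variables with finite mean and distribution having an
exponential tail `(c, λ)`, and let `Φ_n = (1/n) Σ_{k=1}^n E[φ_{(k:k)}]`. Then
`Φ_n / (ln n / λ) → 1`. -/
theorem average_expected_maxima_exponential_tail
    {Ω : Type*} [MeasureSpace Ω] [IsProbabilityMeasure (ℙ : Measure Ω)]
    (c lam : ℝ) (hc : 0 < c) (hlam : 0 < lam)
    (φ : ℕ → Ω → ℝ) (hmeas : ∀ i, Measurable (φ i))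
    (hnonneg : ∀ i ω, 0 ≤ φ i ω)
    (hint : Integrable (φ 0) ℙ)
    (hindep : iIndepFun φ ℙ)
    (hident : ∀ i, IdentDistrib (φ i) (φ 0) ℙ ℙ)
    (htail : Tendsto
      (fun x : ℝ => (ℙ {ω | φ 0 ω > x}).toReal / (c * Real.exp (-lam * x)))
      atTop (𝓝 1)) :
    Tendsto (fun n : ℕ =>
        ((n : ℝ)⁻¹ * ∑ k ∈ Finset.Icc 1 n, ∫ ω, ⨆ i : Fin k, φ (i : ℕ) ω) /
          (Real.log n / lam))
      atTop (𝓝 1) := by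
  -- tail bounds
  have hub := union_bound φ hident
  have htm := tail_max φ hmeas hindep hident
  -- upper tail constant
  obtain ⟨x₀', hx₀'⟩ : ∃ x₀', ∀ x ≥ x₀',
      (ℙ {ω | x < φ 0 ω}).toReal / (c * Real.exp (-lam * x)) ≤ 2 := by
    have := htail.eventually (eventually_le_nhds (by norm_num : (1:ℝ) < 2))
    simpa [eventually_atTop, gt_iff_lt] using this
  obtain ⟨x₁', hx₁'⟩ : ∃ x₁', ∀ x ≥ x₁',
      (1:ℝ)/2 ≤ (ℙ {ω | x < φ 0 ω}).toReal / (c * Real.exp (-lam * x)) := by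
    have := htail.eventually (eventually_ge_nhds (by norm_num : (1:ℝ)/2 < 1))
    simpa [eventually_atTop, gt_iff_lt] using this
  set x₀ : ℝ := max x₀' 0 with hx₀def
  set x₁ : ℝ := max x₁' 0 with hx₁def
  have hGup : ∀ x : ℝ, x₀ ≤ x → ℙ {ω | x < φ 0 ω} ≤ ENNReal.ofReal (2*c * Real.exp (-lam * x)) := by
    intro x hx
    have h1 := hx₀' x (le_trans (le_max_left _ _) hx)
    have hd : 0 < c * Real.exp (-lam * x) := mul_pos hc (Real.exp_pos _)
    rw [div_le_iff₀ hd] at h1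
    have h2 : (ℙ {ω | x < φ 0 ω}).toReal ≤ 2*c*Real.exp (-lam * x) := by nlinarith
    calc ℙ {ω | x < φ 0 ω} = ENNReal.ofReal ((ℙ {ω | x < φ 0 ω}).toReal) := by
          rw [ENNReal.ofReal_toReal (measure_ne_top _ _)]
      _ ≤ _ := ENNReal.ofReal_le_ofReal h2
  have hGlow : ∀ x : ℝ, x₁ ≤ x → (c/2) * Real.exp (-lam * x) ≤ (ℙ {ω | x < φ 0 ω}).toReal := by
    intro x hx
    have h1 := hx₁' x (le_trans (le_max_left _ _) hx)
    have hd : 0 < c * Real.exp (-lam * x) := mul_pos hc (Real.exp_pos _)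
    rw [le_div_iff₀ hd] at h1
    nlinarith
  -- abbreviations
  set I : ℕ → ℝ≥0∞ := fun k => ∫⁻ t in Ioi 0, ℙ {ω | t < ⨆ i : Fin k, φ (i : ℕ) ω} with hI
  set A : ℝ := x₀ + 2*c/lam with hA
  have hA0 : 0 ≤ A :=
    add_nonneg (le_max_right _ _) (div_nonneg (by linarith) hlam.le)
  have hIup : ∀ k, 1 ≤ k → I k ≤ ENNReal.ofReal (Real.log k / lam + A) :=
    fun k hk => Ik_upper hlam (by linarith) (le_max_right _ _) φ hub hGup k hk
  -- expected value identity
  have hEk : ∀ k, 1 ≤ k → (∫ ω, ⨆ i : Fin k, φ (i : ℕ) ω) = (I k).toReal := by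
    intro k hk
    have : Nonempty (Fin k) := ⟨⟨0, hk⟩⟩
    have hbdd : ∀ ω, BddAbove (Set.range fun i : Fin k => φ (i : ℕ) ω) :=
      fun ω => (Set.finite_range _).bddAbove
    have hnn : ∀ ω, 0 ≤ ⨆ i : Fin k, φ (i : ℕ) ω := by
      intro ω
      exact le_trans (hnonneg _ ω) (le_ciSup (hbdd ω) (⟨0, hk⟩ : Fin k))
    rw [integral_eq_lintegral_of_nonneg_ae (Eventually.of_forall hnn)
      (max_meas φ hmeas k hk).aestronglyMeasurable,
      lintegral_eq_lintegral_meas_lt ℙ (Eventually.of_forall hnn)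
      (max_meas φ hmeas k hk).aemeasurable]
  -- real-valued upper bound
  have hEup : ∀ k, 1 ≤ k → (∫ ω, ⨆ i : Fin k, φ (i : ℕ) ω) ≤ Real.log k / lam + A := by
    intro k hk
    rw [hEk k hk]
    apply ENNReal.toReal_le_of_le_ofReal _ (hIup k hk)
    have h0 : 0 ≤ Real.log k := Real.log_nonneg (by exact_mod_cast hk)
    exact add_nonneg (div_nonneg h0 hlam.le) hA0
  -- limit via ε-N
  rw [Metric.tendsto_atTop]
  intro ε hε
  set δ : ℝ := min (ε/2) (1/2) with hδdef
  have hδ0 : 0 < δ := lt_min (by linarith) (by norm_num)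
  have hδ1 : δ < 1 := lt_of_le_of_lt (min_le_right _ _) (by norm_num)
  have hδε : δ ≤ ε/2 := min_le_left _ _
  set B : ℝ := x₁ + |Real.log ((c/2) / Real.log (1/δ))| / lam with hBdef
  have hB0 : 0 ≤ B := add_nonneg (le_max_right _ _) (div_nonneg (abs_nonneg _) hlam.le)
  have hIlow : ∀ k : ℕ, 1 ≤ k → ENNReal.ofReal ((1-δ) * (Real.log k / lam - B)) ≤ I k :=
    fun k hk => Ik_lower hlam hδ0 hδ1 (half_pos hc) (le_max_right _ _) φ hmeas htm hGlow k hk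
  have hElow : ∀ k : ℕ, 1 ≤ k → (1-δ) * (Real.log k / lam - B) ≤ ∫ ω, ⨆ i : Fin k, φ (i:ℕ) ω := by
    intro k hk
    rw [hEk k hk]
    have hne : I k ≠ ⊤ := ne_top_of_le_ne_top ENNReal.ofReal_ne_top (hIup k hk)
    have h2 := ENNReal.toReal_mono hne (hIlow k hk)
    refine le_trans ?_ h2
    by_cases hr : 0 ≤ (1-δ) * (Real.log k / lam - B)
    · rw [ENNReal.toReal_ofReal hr]
    · push_neg at hr
      exact le_trans hr.le ENNReal.toReal_nonneg
  set B₂ : ℝ := 1/lam + B with hB₂def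
  have hB₂0 : 0 ≤ B₂ := add_nonneg (one_div_nonneg.mpr hlam.le) hB0
  -- threshold
  set K : ℝ := 1 + lam*A/ε + lam*B₂*2/ε with hKdef
  have hlogT : Tendsto (fun n : ℕ => Real.log n) atTop atTop :=
    Real.tendsto_log_atTop.comp tendsto_natCast_atTop_atTop
  obtain ⟨N, hN⟩ := (hlogT.eventually_gt_atTop K).exists_forall_of_atTop
  refine ⟨N, fun n hn => ?_⟩
  have hL : K < Real.log n := hN n hn
  have hKa0 : 0 ≤ lam*A/ε := div_nonneg (mul_nonneg hlam.le hA0) hε.le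
  have hKb0 : 0 ≤ lam*B₂*2/ε :=
    div_nonneg (mul_nonneg (mul_nonneg hlam.le hB₂0) (by norm_num)) hε.le
  have hK1 : (1:ℝ) ≤ K := by
    simp only [hKdef]; linarith
  set L : ℝ := Real.log n with hLdef
  have hL1 : 1 < L := lt_of_le_of_lt hK1 hL
  have hL0 : 0 < L := by linarith
  have hn1 : (1:ℝ) ≤ (n:ℝ) := by
    have hne : n ≠ 0 := by
      rintro rfl
      rw [hLdef] at hL1
      norm_num at hL1
    exact_mod_cast Nat.one_le_iff_ne_zero.mpr hne
  have hn0 : (0:ℝ) < n := by linarith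
  set S : ℝ := ∑ k ∈ Finset.Icc 1 n, ∫ ω, ⨆ i : Fin k, φ (i : ℕ) ω with hSdef
  set Φ : ℝ := (n:ℝ)⁻¹ * S with hΦdef
  -- sum bounds
  have hScard : ((Finset.Icc 1 n).card : ℝ) = n := by
    rw [Nat.card_Icc]; simp
  have hSup : S ≤ (n:ℝ) * L / lam + n * A := by
    calc S ≤ ∑ k ∈ Finset.Icc 1 n, (Real.log k / lam + A) :=
          Finset.sum_le_sum (fun k hk => hEup k (Finset.mem_Icc.mp hk).1)
      _ = (∑ k ∈ Finset.Icc 1 n, Real.log k) / lam + n * A := by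
          rw [Finset.sum_add_distrib, Finset.sum_const, ← Finset.sum_div, nsmul_eq_mul, hScard]
      _ ≤ (n:ℝ) * L / lam + n * A := by
          have := sum_log_le n
          have h2 : (∑ k ∈ Finset.Icc 1 n, Real.log k) / lam ≤ (n:ℝ) * L / lam :=
            (div_le_div_iff_of_pos_right hlam).mpr ((sum_log_le n).trans_eq (by rw [hLdef]))
          linarith
  have hSlow : (n:ℝ) * ((1-δ) * (L/lam - B₂)) ≤ S := by
    calc (n:ℝ) * ((1-δ) * (L/lam - B₂))
        ≤ (1-δ) * ((∑ k ∈ Finset.Icc 1 n, Real.log k)/lam - n * B) := by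
          have h1 : (n:ℝ) * L - n ≤ ∑ k ∈ Finset.Icc 1 n, Real.log k := le_sum_log n
          have h2 : ((n:ℝ) * L - n)/lam ≤ (∑ k ∈ Finset.Icc 1 n, Real.log k)/lam :=
            (div_le_div_iff_of_pos_right hlam).mpr h1
          have h3 : (n:ℝ) * (L/lam - B₂) ≤ (∑ k ∈ Finset.Icc 1 n, Real.log k)/lam - n*B := by
            rw [hB₂def]
            have : (n:ℝ) * (L/lam - (1/lam + B)) = ((n:ℝ)*L - n)/lam - n*B := by
              field_simp; ring
            rw [this]
            linarith
          calc (n:ℝ) * ((1-δ) * (L/lam - B₂)) = (1-δ) * ((n:ℝ) * (L/lam - B₂)) := by ring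
            _ ≤ _ := mul_le_mul_of_nonneg_left h3 (by linarith)
      _ = ∑ k ∈ Finset.Icc 1 n, ((1-δ) * (Real.log k / lam - B)) := by
          rw [← Finset.mul_sum]
          congr 1
          rw [Finset.sum_sub_distrib, Finset.sum_const, nsmul_eq_mul, hScard, ← Finset.sum_div]
      _ ≤ S := Finset.sum_le_sum (fun k hk => hElow k (Finset.mem_Icc.mp hk).1)
  -- Φ bounds
  have hΦup : Φ ≤ L/lam + A := by
    rw [hΦdef]
    calc (n:ℝ)⁻¹ * S ≤ (n:ℝ)⁻¹ * ((n:ℝ) * L / lam + n * A) :=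
          mul_le_mul_of_nonneg_left hSup (by positivity)
      _ = L/lam + A := by field_simp [hn0.ne', hlam.ne']
  have hΦlow : (1-δ) * (L/lam - B₂) ≤ Φ := by
    rw [hΦdef]
    calc (1-δ) * (L/lam - B₂) = (n:ℝ)⁻¹ * ((n:ℝ) * ((1-δ) * (L/lam - B₂))) := by
          field_simp [hn0.ne']
      _ ≤ (n:ℝ)⁻¹ * S := mul_le_mul_of_nonneg_left hSlow (by positivity)
  -- final bound
  clear_value I A δ B B₂ K L S Φ
  clear hIup hIlow hEk hEup hElow htm hub hGup hGlow hx₀' hx₁' htail hSup hSlow hScard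
  clear hlogT hN hmeas hnonneg hint hindep hident hI hSdef hΦdef hδdef hBdef hB₂def hLdef hA
  clear I S hn hn1 φ
  have hD : 0 < L / lam := div_pos hL0 hlam
  have hfup : Φ / (L/lam) ≤ 1 + A*lam/L := by
    rw [div_le_iff₀ hD]
    calc Φ ≤ L/lam + A := hΦup
      _ = (1 + A*lam/L) * (L/lam) := by field_simp [hL0.ne', hlam.ne']
  have hflow : (1-δ) * (1 - B₂*lam/L) ≤ Φ / (L/lam) := by
    rw [le_div_iff₀ hD]
    calc (1-δ) * (1 - B₂*lam/L) * (L/lam) = (1-δ) * ((1 - B₂*lam/L) * (L/lam)) := by ring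
      _ = (1-δ) * (L/lam - B₂) := by
          congr 1
          field_simp [hL0.ne', hlam.ne']
      _ ≤ Φ := hΦlow
  have hs0 : 0 ≤ B₂*lam/L := div_nonneg (mul_nonneg hB₂0 hlam.le) hL0.le
  have hup2 : A*lam/L < ε := by
    rw [div_lt_iff₀ hL0]
    have hKA : lam*A/ε ≤ K := by
      simp only [hKdef]; linarith
    have h3 : lam*A ≤ ε * K := by
      rw [div_le_iff₀ hε] at hKA
      linarith
    have h4 : ε * K < ε * L := mul_lt_mul_of_pos_left hL hε
    linarith
  have hlow2 : δ + B₂*lam/L < ε := by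
    have hKB : lam*B₂*2/ε ≤ K := by
      simp only [hKdef]; linarith
    have h1 : lam*B₂*2 ≤ ε * K := by
      rw [div_le_iff₀ hε] at hKB
      linarith
    have h2 : B₂*lam/L < ε/2 := by
      rw [div_lt_iff₀ hL0]
      have h4 : ε * K < ε * L := mul_lt_mul_of_pos_left hL hε
      linarith
    linarith
  rw [Real.dist_eq, abs_lt]
  constructor
  · have h1 : 1 - (δ + B₂*lam/L) ≤ (1-δ) * (1 - B₂*lam/L) := by nlinarith [mul_nonneg hδ0.le hs0]
    have h2 := le_trans h1 hflow
    linarith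
  · linarith [hfup, hup2]
end

section
/- Fix ρ ∈ (0,1). Let X and Y be independent nonnegative random variables with finite means, where X has an exponential tail with parameters (c_X, λ_X) and Y has an exponential tail with parameters (c_Y, λ_Y). Let Z = (1−ρ)X + ρY and let Z_{(n:n)} be the maximum of n i.i.d. copies of Z. Then lim_{n→∞} E[Z_{(n:n)}] / ln n = max{(1−ρ)/λ_X, ρ/λ_Y}. -/
open MeasureTheory ProbabilityTheory Filter Topology Set

namespace ExpMaxAux

variable {Ω : Type*} [MeasurableSpace Ω] {μ : Measure Ω} [IsProbabilityMeasure μ]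

lemma toReal_prob_le_one {s : Set Ω} : (μ s).toReal ≤ 1 := by
  rw [← ENNReal.toReal_one]
  exact ENNReal.toReal_mono ENNReal.one_ne_top prob_le_one

lemma prob_mono {s t : Set Ω} (h : s ⊆ t) : (μ s).toReal ≤ (μ t).toReal :=
  ENNReal.toReal_mono (measure_ne_top _ _) (measure_mono h)

lemma tail_global (f : Ω → ℝ) (c lam : ℝ) (hc : 0 < c) (hlam : 0 < lam)
    (htail : Tendsto (fun x : ℝ => (μ {ω | f ω > x}).toReal / (c * Real.exp (-lam * x)))
      atTop (𝓝 1)) :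
    ∃ C, 0 < C ∧ ∀ y : ℝ, (μ {ω | f ω ≥ y}).toReal ≤ C * Real.exp (-lam * y) := by
  obtain ⟨B, hB⟩ := eventually_atTop.mp
    (htail.eventually_le_const (by norm_num : (1:ℝ) < 2))
  refine ⟨max (2 * c * Real.exp lam) (Real.exp (lam * (B + 1))), ?_, fun y => ?_⟩
  · exact lt_max_of_lt_left (by positivity)
  rcases le_or_gt (B + 1) y with hy | hy
  · have h1 : (μ {ω | f ω ≥ y}).toReal ≤ (μ {ω | f ω > y - 1}).toReal :=
      prob_mono fun ω (hω : f ω ≥ y) => by simp only [mem_setOf_eq]; linarith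
    have h2 := hB (y - 1) (by linarith)
    have hden : 0 < c * Real.exp (-lam * (y - 1)) := by positivity
    have h3 : (μ {ω | f ω > y - 1}).toReal ≤ 2 * (c * Real.exp (-lam * (y - 1))) :=
      (div_le_iff₀ hden).mp h2
    have h4 : 2 * (c * Real.exp (-lam * (y - 1))) = (2 * c * Real.exp lam) * Real.exp (-lam * y) := by
      rw [show -lam * (y - 1) = lam + (-lam * y) by ring, Real.exp_add]; ring
    calc (μ {ω | f ω ≥ y}).toReal ≤ 2 * (c * Real.exp (-lam * (y - 1))) := h1.trans h3
      _ = (2 * c * Real.exp lam) * Real.exp (-lam * y) := h4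
      _ ≤ _ := by
          apply mul_le_mul_of_nonneg_right (le_max_left _ _) (Real.exp_pos _).le
  · calc (μ {ω | f ω ≥ y}).toReal ≤ 1 := toReal_prob_le_one
      _ ≤ Real.exp (lam * (B + 1)) * Real.exp (-lam * y) := by
          rw [← Real.exp_add]
          apply Real.one_le_exp; nlinarith
      _ ≤ _ := mul_le_mul_of_nonneg_right (le_max_right _ _) (Real.exp_pos _).le


lemma tail_sum (A B : Ω → ℝ) (hA : Measurable A) (hB : Measurable B)
    (hA0 : ∀ ω, 0 ≤ A ω) (hB0 : ∀ ω, 0 ≤ B ω) (hind : IndepFun A B μ)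
    (CA CB r1 r2 : ℝ) (hCA : 0 < CA) (hCB : 0 < CB) (hr1 : 0 < r1) (hr2 : 0 < r2)
    (hAt : ∀ y, (μ {ω | A ω ≥ y}).toReal ≤ CA * Real.exp (-r1 * y))
    (hBt : ∀ y, (μ {ω | B ω ≥ y}).toReal ≤ CB * Real.exp (-r2 * y))
    (s : ℝ) (hs : 0 < s) (hslt : s < min r1 r2) :
    ∃ M, 0 < M ∧ ∀ x, (μ {ω | A ω + B ω ≥ x}).toReal ≤ M * Real.exp (-s * x) := by
  set lamS := min r1 r2 with hlamS
  have hlamS0 : 0 < lamS := lt_min hr1 hr2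
  set K : ℕ := ⌈lamS / (lamS - s)⌉₊ with hKdef
  have hd : 0 < lamS - s := by linarith
  have hK1 : 1 ≤ K := Nat.one_le_ceil_iff.mpr (div_pos hlamS0 hd)
  have hKpos : (0:ℝ) < K := by exact_mod_cast Nat.pos_of_ne_zero (by omega)
  have hKs : s * K ≤ lamS * (K - 1) := by
    have h1 : lamS / (lamS - s) ≤ (K : ℝ) := Nat.le_ceil _
    have h2 : lamS ≤ (K : ℝ) * (lamS - s) := by
      rw [div_le_iff₀ (by linarith : (0:ℝ) < lamS - s)] at h1; linarith
    linarith
  refine ⟨max (CA + K * (CA * CB)) 1, lt_max_of_lt_right one_pos, fun x => ?_⟩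
  rcases le_or_gt x 0 with hx | hx
  · calc (μ _).toReal ≤ 1 := toReal_prob_le_one
      _ ≤ max (CA + K * (CA * CB)) 1 * Real.exp (-s * x) := by
          have h1 : (1:ℝ) ≤ Real.exp (-s * x) := Real.one_le_exp (by nlinarith)
          have h2 : (1:ℝ) ≤ max (CA + K * (CA * CB)) 1 := le_max_right _ _
          nlinarith
  -- main case x > 0
  have hincl : {ω | A ω + B ω ≥ x} ⊆
      (A ⁻¹' Ici x) ∪ ⋃ k ∈ Finset.range K,
        (A ⁻¹' Ici ((k : ℝ) * x / K) ∩ B ⁻¹' Ici (((K : ℝ) - 1 - k) * x / K)) := by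
    intro ω hω
    simp only [mem_setOf_eq] at hω
    by_cases hAx : x ≤ A ω
    · exact Or.inl hAx
    push_neg at hAx
    right
    set k : ℕ := ⌊A ω * K / x⌋₊ with hk
    have hkK : k < K := by
      rw [hk]
      apply Nat.floor_lt (div_nonneg (mul_nonneg (hA0 ω) hKpos.le) hx.le) |>.2
      rw [div_lt_iff₀ hx]
      nlinarith
    have hfl : (k : ℝ) ≤ A ω * K / x :=
      Nat.floor_le (div_nonneg (mul_nonneg (hA0 ω) hKpos.le) hx.le)
    have hA_ge : (k : ℝ) * x / K ≤ A ω := by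
      rw [div_le_iff₀ hKpos]
      rw [le_div_iff₀ hx] at hfl
      nlinarith
    have hfl2 : A ω * K / x < (k : ℝ) + 1 := Nat.lt_floor_add_one _
    have hB_ge : ((K : ℝ) - 1 - k) * x / K ≤ B ω := by
      rw [div_le_iff₀ hKpos]
      rw [div_lt_iff₀ hx] at hfl2
      nlinarith
    refine mem_iUnion₂.mpr ⟨k, Finset.mem_range.mpr hkK, hA_ge, hB_ge⟩
  have hstep : μ {ω | A ω + B ω ≥ x} ≤
      μ (A ⁻¹' Ici x) + ∑ k ∈ Finset.range K,
        μ (A ⁻¹' Ici ((k : ℝ) * x / K) ∩ B ⁻¹' Ici (((K : ℝ) - 1 - k) * x / K)) :=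
    (measure_mono hincl).trans ((measure_union_le _ _).trans
      (add_le_add le_rfl (measure_biUnion_finset_le _ _)))
  have hne : μ (A ⁻¹' Ici x) + ∑ k ∈ Finset.range K,
      μ (A ⁻¹' Ici ((k : ℝ) * x / K) ∩ B ⁻¹' Ici (((K : ℝ) - 1 - k) * x / K)) ≠ ⊤ := by
    apply ENNReal.add_ne_top.2
    constructor
    · exact measure_ne_top _ _
    · exact (ENNReal.sum_lt_top.2 fun k _ => (measure_lt_top _ _)).ne
  have hstep2 : (μ {ω | A ω + B ω ≥ x}).toReal ≤
      (μ (A ⁻¹' Ici x)).toReal + ∑ k ∈ Finset.range K,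
        (μ (A ⁻¹' Ici ((k : ℝ) * x / K) ∩ B ⁻¹' Ici (((K : ℝ) - 1 - k) * x / K))).toReal := by
    have := ENNReal.toReal_mono hne hstep
    rwa [ENNReal.toReal_add (measure_ne_top _ _)
      (ENNReal.sum_lt_top.2 fun k _ => (measure_lt_top _ _)).ne,
      ENNReal.toReal_sum (fun k _ => measure_ne_top _ _)] at this
  -- bound each product term
  have hterm : ∀ k ∈ Finset.range K,
      (μ (A ⁻¹' Ici ((k : ℝ) * x / K) ∩ B ⁻¹' Ici (((K : ℝ) - 1 - k) * x / K))).toReal ≤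
        (CA * CB) * Real.exp (-s * x) := by
    intro k hk
    have hkK : (k : ℝ) < K := by exact_mod_cast Finset.mem_range.mp hk
    have hk0 : (0:ℝ) ≤ k := Nat.cast_nonneg _
    rw [hind.measure_inter_preimage_eq_mul _ _ measurableSet_Ici measurableSet_Ici,
      ENNReal.toReal_mul]
    have h1 : (μ (A ⁻¹' Ici ((k : ℝ) * x / K))).toReal ≤
        CA * Real.exp (-r1 * ((k : ℝ) * x / K)) := hAt _
    have h2 : (μ (B ⁻¹' Ici (((K : ℝ) - 1 - k) * x / K))).toReal ≤
        CB * Real.exp (-r2 * (((K : ℝ) - 1 - k) * x / K)) := hBt _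
    calc (μ (A ⁻¹' Ici ((k : ℝ) * x / K))).toReal *
          (μ (B ⁻¹' Ici (((K : ℝ) - 1 - k) * x / K))).toReal
        ≤ (CA * Real.exp (-r1 * ((k : ℝ) * x / K))) *
          (CB * Real.exp (-r2 * (((K : ℝ) - 1 - k) * x / K))) := by
          apply mul_le_mul h1 h2 ENNReal.toReal_nonneg (by positivity)
      _ = (CA * CB) * Real.exp (-r1 * ((k : ℝ) * x / K) + -r2 * (((K : ℝ) - 1 - k) * x / K)) := by
          rw [Real.exp_add]; ring
      _ ≤ (CA * CB) * Real.exp (-s * x) := by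
          apply mul_le_mul_of_nonneg_left _ (by positivity)
          apply Real.exp_le_exp.2
          have hr1' : lamS ≤ r1 := min_le_left _ _
          have hr2' : lamS ≤ r2 := min_le_right _ _
          have key : s * K * x ≤ ((k:ℝ) * r1 + ((K:ℝ) - 1 - k) * r2) * x := by
            apply mul_le_mul_of_nonneg_right _ hx.le
            have hk1 : (k : ℝ) + 1 ≤ K := by exact_mod_cast Nat.succ_le_of_lt (Finset.mem_range.mp hk)
            nlinarith [mul_nonneg hk0 (sub_nonneg.2 hr1'),
              mul_nonneg (by linarith : (0:ℝ) ≤ (K:ℝ) - 1 - k) (sub_nonneg.2 hr2')]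
          rw [div_eq_mul_inv, div_eq_mul_inv]
          rw [show -r1 * ((k:ℝ) * x * (K:ℝ)⁻¹) + -r2 * (((K:ℝ) - 1 - k) * x * (K:ℝ)⁻¹)
            = -((((k:ℝ) * r1 + ((K:ℝ) - 1 - k) * r2) * x) * (K:ℝ)⁻¹) by ring]
          rw [show -s * x = -((s * K * x) * (K:ℝ)⁻¹) by field_simp]
          apply neg_le_neg
          apply mul_le_mul_of_nonneg_right key (by positivity)
  have hleft : (μ (A ⁻¹' Ici x)).toReal ≤ CA * Real.exp (-s * x) := by
    calc (μ (A ⁻¹' Ici x)).toReal ≤ CA * Real.exp (-r1 * x) := hAt x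
      _ ≤ CA * Real.exp (-s * x) := by
          apply mul_le_mul_of_nonneg_left _ hCA.le
          apply Real.exp_le_exp.2
          have : s ≤ r1 := le_trans hslt.le (min_le_left _ _)
          nlinarith
  calc (μ {ω | A ω + B ω ≥ x}).toReal
      ≤ (μ (A ⁻¹' Ici x)).toReal + ∑ k ∈ Finset.range K,
        (μ (A ⁻¹' Ici ((k : ℝ) * x / K) ∩ B ⁻¹' Ici (((K : ℝ) - 1 - k) * x / K))).toReal := hstep2
    _ ≤ CA * Real.exp (-s * x) + ∑ _k ∈ Finset.range K, (CA * CB) * Real.exp (-s * x) := by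
        exact add_le_add hleft (Finset.sum_le_sum hterm)
    _ = (CA + K * (CA * CB)) * Real.exp (-s * x) := by
        rw [Finset.sum_const, Finset.card_range, nsmul_eq_mul]; ring
    _ ≤ max (CA + K * (CA * CB)) 1 * Real.exp (-s * x) := by
        apply mul_le_mul_of_nonneg_right (le_max_left _ _) (Real.exp_pos _).le


lemma pos_part_bound (W : Ω → ℝ) (hWint : Integrable W μ)
    (s M : ℝ) (hs : 0 < s) (hM : 0 < M)
    (htail : ∀ x, (μ {ω | W ω ≥ x}).toReal ≤ M * Real.exp (-s * x)) (t : ℝ) :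
    ∫ ω, max (W ω - t) 0 ∂μ ≤
      (M * ∫ u in Ioi (0:ℝ), Real.exp (-s * u)) * Real.exp (-s * t) := by
  have hg_int : Integrable (fun ω => max (W ω - t) 0) μ :=
    (hWint.sub (integrable_const t)).pos_part
  rw [hg_int.integral_eq_integral_meas_lt
    (Eventually.of_forall fun ω => le_max_right _ _)]
  have hbound : ∀ u ∈ Ioi (0:ℝ),
      (μ {a | u < max (W a - t) 0}).toReal ≤ (M * Real.exp (-s * t)) * Real.exp (-s * u) := by
    intro u hu
    have h1 : {a | u < max (W a - t) 0} ⊆ {ω | W ω ≥ t + u} := by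
      intro a ha
      simp only [mem_setOf_eq, lt_max_iff] at ha
      rcases ha with h | h
      · simp only [mem_setOf_eq]; linarith
      · exact absurd h (not_lt.mpr (le_of_lt hu))
    calc (μ {a | u < max (W a - t) 0}).toReal ≤ (μ {ω | W ω ≥ t + u}).toReal := prob_mono h1
      _ ≤ M * Real.exp (-s * (t + u)) := htail _
      _ = (M * Real.exp (-s * t)) * Real.exp (-s * u) := by
          rw [mul_assoc, ← Real.exp_add]; ring_nf
  calc ∫ u in Ioi (0:ℝ), (μ {a | u < max (W a - t) 0}).toReal
      ≤ ∫ u in Ioi (0:ℝ), (M * Real.exp (-s * t)) * Real.exp (-s * u) := by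
        apply integral_mono_of_nonneg
        · exact Eventually.of_forall fun u => ENNReal.toReal_nonneg
        · exact ((exp_neg_integrableOn_Ioi 0 hs).const_mul _)
        · filter_upwards [self_mem_ae_restrict measurableSet_Ioi] with u hu
          exact hbound u hu
    _ = (M * ∫ u in Ioi (0:ℝ), Real.exp (-s * u)) * Real.exp (-s * t) := by
        rw [integral_const_mul]; ring


end ExpMaxAux

section MainProof
open MeasureTheory ProbabilityTheory Filter Topology Set ExpMaxAux

set_option maxHeartbeats 2000000 in
/-- Fix `ρ ∈ (0,1)`. Let `X` and `Y` be independent nonnegative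
random variables with finite means, with exponential tails `(c_X, λ_X)` and
`(c_Y, λ_Y)` respectively. Let `Z = (1−ρ)X + ρY` and `Z_{(n:n)}` be the maximum of
`n` i.i.d. copies of `Z`. Then `E[Z_{(n:n)}] / ln n → max{(1−ρ)/λ_X, ρ/λ_Y}`. -/
theorem expected_maximum_convex_combination_exponential_tails
    {Ω : Type*} [MeasureSpace Ω] [IsProbabilityMeasure (ℙ : Measure Ω)]
    (ρ : ℝ) (hρ : ρ ∈ Set.Ioo (0 : ℝ) 1)
    (cX lamX cY lamY : ℝ) (hcX : 0 < cX) (hlamX : 0 < lamX)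
    (hcY : 0 < cY) (hlamY : 0 < lamY)
    (X Y : Ω → ℝ) (hXmeas : Measurable X) (hYmeas : Measurable Y)
    (hXnonneg : ∀ ω, 0 ≤ X ω) (hYnonneg : ∀ ω, 0 ≤ Y ω)
    (hXint : Integrable X ℙ) (hYint : Integrable Y ℙ)
    (hindep : IndepFun X Y ℙ)
    (hXtail : Tendsto
      (fun x : ℝ => (ℙ {ω | X ω > x}).toReal / (cX * Real.exp (-lamX * x)))
      atTop (𝓝 1))
    (hYtail : Tendsto
      (fun x : ℝ => (ℙ {ω | Y ω > x}).toReal / (cY * Real.exp (-lamY * x)))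
      atTop (𝓝 1))
    (Z : ℕ → Ω → ℝ) (hZmeas : ∀ i, Measurable (Z i))
    (hZindep : iIndepFun Z ℙ)
    (hZident : ∀ i, IdentDistrib (Z i) (fun ω => (1 - ρ) * X ω + ρ * Y ω) ℙ ℙ) :
    Tendsto (fun n : ℕ => (∫ ω, ⨆ i : Fin n, Z (i : ℕ) ω) / Real.log n)
      atTop (𝓝 (max ((1 - ρ) / lamX) (ρ / lamY))) := by
  classical
  obtain ⟨hρ0, hρ1⟩ := hρ
  have h1ρ : 0 < 1 - ρ := by linarith
  set W : Ω → ℝ := fun ω => (1 - ρ) * X ω + ρ * Y ω with hWdef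
  have hWmeas : Measurable W := (hXmeas.const_mul _).add (hYmeas.const_mul _)
  have hWint : Integrable W ℙ := (hXint.const_mul _).add (hYint.const_mul _)
  have hWnonneg : ∀ ω, 0 ≤ W ω := fun ω =>
    add_nonneg (mul_nonneg h1ρ.le (hXnonneg ω)) (mul_nonneg hρ0.le (hYnonneg ω))
  set r1 : ℝ := lamX / (1 - ρ) with hr1def
  set r2 : ℝ := lamY / ρ with hr2def
  have hr1 : 0 < r1 := div_pos hlamX h1ρ
  have hr2 : 0 < r2 := div_pos hlamY hρ0
  set lamS : ℝ := min r1 r2 with hlamSdef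
  have hlamS0 : 0 < lamS := lt_min hr1 hr2
  have hL : max ((1 - ρ) / lamX) (ρ / lamY) = 1 / lamS := by
    have e1 : (1 - ρ) / lamX = 1 / r1 := by rw [hr1def, one_div_div]
    have e2 : ρ / lamY = 1 / r2 := by rw [hr2def, one_div_div]
    rw [e1, e2, hlamSdef]
    rcases le_total r1 r2 with h | h
    · rw [min_eq_left h, max_eq_left (one_div_le_one_div_of_le hr1 h)]
    · rw [min_eq_right h, max_eq_right (one_div_le_one_div_of_le hr2 h)]
  rw [hL]
  -- global tail bounds
  obtain ⟨CX, hCX0, hCXb⟩ := ExpMaxAux.tail_global X cX lamX hcX hlamX hXtail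
  obtain ⟨CY, hCY0, hCYb⟩ := ExpMaxAux.tail_global Y cY lamY hcY hlamY hYtail
  have hAt : ∀ y : ℝ, (ℙ {ω | (1 - ρ) * X ω ≥ y}).toReal ≤ CX * Real.exp (-r1 * y) := by
    intro y
    have hset : {ω | (1 - ρ) * X ω ≥ y} = {ω | X ω ≥ y / (1 - ρ)} := by
      ext ω
      simp only [mem_setOf_eq, ge_iff_le, div_le_iff₀ h1ρ]
      rw [mul_comm]
    rw [hset]
    calc (ℙ {ω | X ω ≥ y / (1 - ρ)}).toReal
        ≤ CX * Real.exp (-lamX * (y / (1 - ρ))) := hCXb _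
      _ = CX * Real.exp (-r1 * y) := by
          congr 1
          rw [hr1def]
          field_simp
  have hBt : ∀ y : ℝ, (ℙ {ω | ρ * Y ω ≥ y}).toReal ≤ CY * Real.exp (-r2 * y) := by
    intro y
    have hset : {ω | ρ * Y ω ≥ y} = {ω | Y ω ≥ y / ρ} := by
      ext ω
      simp only [mem_setOf_eq, ge_iff_le, div_le_iff₀ hρ0]
      rw [mul_comm]
    rw [hset]
    calc (ℙ {ω | Y ω ≥ y / ρ}).toReal
        ≤ CY * Real.exp (-lamY * (y / ρ)) := hCYb _
      _ = CY * Real.exp (-r2 * y) := by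
          congr 1
          rw [hr2def]
          field_simp
  have hindAB : IndepFun (fun ω => (1 - ρ) * X ω) (fun ω => ρ * Y ω) ℙ :=
    hindep.comp (measurable_id.const_mul (1 - ρ)) (measurable_id.const_mul ρ)
  have tailW : ∀ s : ℝ, 0 < s → s < lamS →
      ∃ M, 0 < M ∧ ∀ x, (ℙ {ω | W ω ≥ x}).toReal ≤ M * Real.exp (-s * x) := by
    intro s hs hslt
    exact ExpMaxAux.tail_sum (fun ω => (1 - ρ) * X ω) (fun ω => ρ * Y ω)
      (hXmeas.const_mul _) (hYmeas.const_mul _)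
      (fun ω => mul_nonneg h1ρ.le (hXnonneg ω)) (fun ω => mul_nonneg hρ0.le (hYnonneg ω))
      hindAB CX CY r1 r2 hCX0 hCY0 hr1 hr2 hAt hBt s hs hslt
  -- lower tail bound for W
  have tailWlow : ∃ c', 0 < c' ∧ ∃ B0 : ℝ, ∀ x ≥ B0,
      c' * Real.exp (-lamS * x) ≤ (ℙ {ω | W ω > x}).toReal := by
    rcases le_total r1 r2 with hmin | hmin
    · have hlamSr : lamS = r1 := min_eq_left hmin
      obtain ⟨BX, hBX⟩ := eventually_atTop.mp
        (hXtail.eventually_const_le (by norm_num : (1:ℝ)/2 < 1))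
      refine ⟨cX / 2, by positivity, BX * (1 - ρ), fun x hx => ?_⟩
      have hx' : BX ≤ x / (1 - ρ) := (le_div_iff₀ h1ρ).mpr (by linarith)
      have h1 := hBX _ hx'
      have hden : 0 < cX * Real.exp (-lamX * (x / (1 - ρ))) := by positivity
      have h2 : (1/2) * (cX * Real.exp (-lamX * (x / (1 - ρ)))) ≤
          (ℙ {ω | X ω > x / (1 - ρ)}).toReal := (le_div_iff₀ hden).mp h1
      have hsub : {ω | X ω > x / (1 - ρ)} ⊆ {ω | W ω > x} := by
        intro ω hω
        simp only [mem_setOf_eq, gt_iff_lt] at hω ⊢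
        rw [div_lt_iff₀ h1ρ] at hω
        have hy := mul_nonneg hρ0.le (hYnonneg ω)
        show x < (1 - ρ) * X ω + ρ * Y ω
        nlinarith
      calc cX / 2 * Real.exp (-lamS * x)
          = (1/2) * (cX * Real.exp (-lamX * (x / (1 - ρ)))) := by
            rw [hlamSr, hr1def]
            rw [show -lamX * (x / (1 - ρ)) = -(lamX / (1 - ρ)) * x by field_simp]
            ring
        _ ≤ (ℙ {ω | X ω > x / (1 - ρ)}).toReal := h2
        _ ≤ (ℙ {ω | W ω > x}).toReal := ExpMaxAux.prob_mono hsub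
    · have hlamSr : lamS = r2 := min_eq_right hmin
      obtain ⟨BY, hBY⟩ := eventually_atTop.mp
        (hYtail.eventually_const_le (by norm_num : (1:ℝ)/2 < 1))
      refine ⟨cY / 2, by positivity, BY * ρ, fun x hx => ?_⟩
      have hx' : BY ≤ x / ρ := (le_div_iff₀ hρ0).mpr (by linarith)
      have h1 := hBY _ hx'
      have hden : 0 < cY * Real.exp (-lamY * (x / ρ)) := by positivity
      have h2 : (1/2) * (cY * Real.exp (-lamY * (x / ρ))) ≤
          (ℙ {ω | Y ω > x / ρ}).toReal := (le_div_iff₀ hden).mp h1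
      have hsub : {ω | Y ω > x / ρ} ⊆ {ω | W ω > x} := by
        intro ω hω
        simp only [mem_setOf_eq, gt_iff_lt] at hω ⊢
        rw [div_lt_iff₀ hρ0] at hω
        have hy := mul_nonneg h1ρ.le (hXnonneg ω)
        show x < (1 - ρ) * X ω + ρ * Y ω
        nlinarith
      calc cY / 2 * Real.exp (-lamS * x)
          = (1/2) * (cY * Real.exp (-lamY * (x / ρ))) := by
            rw [hlamSr, hr2def]
            rw [show -lamY * (x / ρ) = -(lamY / ρ) * x by field_simp]
            ring
        _ ≤ (ℙ {ω | Y ω > x / ρ}).toReal := h2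
        _ ≤ (ℙ {ω | W ω > x}).toReal := ExpMaxAux.prob_mono hsub
  -- facts about the copies Z i
  have hZint : ∀ i, Integrable (Z i) ℙ := fun i => (hZident i).integrable_iff.mpr hWint
  have hZae : ∀ i : ℕ, ∀ᵐ ω ∂(ℙ : Measure Ω), 0 ≤ Z i ω := by
    intro i
    have hpre : W ⁻¹' Iio 0 = ∅ :=
      eq_empty_of_forall_notMem fun ω h => absurd (hWnonneg ω) (not_le.2 h)
    have h0 : (ℙ : Measure Ω) (Z i ⁻¹' Iio 0) = 0 := by
      rw [(hZident i).measure_mem_eq measurableSet_Iio, hpre]; simp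
    rw [ae_iff]
    convert h0 using 2
    ext ω
    simp [not_le, Set.mem_preimage]
  set Mn : ℕ → Ω → ℝ := fun n ω => ⨆ i : Fin n, Z (i : ℕ) ω with hMndef
  have hMnmeas : ∀ n, Measurable (Mn n) := fun n => Measurable.iSup fun i => hZmeas i
  have hbdd : ∀ (n : ℕ) (ω : Ω), BddAbove (Set.range fun i : Fin n => Z (i : ℕ) ω) :=
    fun n ω => (Set.finite_range _).bddAbove
  have hMn_int : ∀ n : ℕ, 0 < n → Integrable (Mn n) ℙ := by
    intro n hn
    have hne : Nonempty (Fin n) := ⟨⟨0, hn⟩⟩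
    apply Integrable.mono' (integrable_finset_sum Finset.univ
      (fun (i : Fin n) _ => (hZint i).abs)) (hMnmeas n).aestronglyMeasurable
    apply Eventually.of_forall
    intro ω
    rw [Real.norm_eq_abs, abs_le]
    constructor
    · have h1 : Z ((⟨0, hn⟩ : Fin n) : ℕ) ω ≤ Mn n ω := le_ciSup (hbdd n ω) _
      have h2 := Finset.single_le_sum (f := fun j : Fin n => |Z (j : ℕ) ω|)
        (fun j _ => abs_nonneg _) (Finset.mem_univ (⟨0, hn⟩ : Fin n))
      have h3 := neg_abs_le (Z ((⟨0, hn⟩ : Fin n) : ℕ) ω)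
      linarith
    · apply ciSup_le
      intro i
      exact (le_abs_self _).trans
        (Finset.single_le_sum (f := fun j : Fin n => |Z (j : ℕ) ω|)
          (fun j _ => abs_nonneg _) (Finset.mem_univ i))
  -- product formula
  have hprod : ∀ n : ℕ, 0 < n → ∀ t : ℝ,
      (ℙ : Measure Ω) {ω | Mn n ω ≤ t} = ((ℙ : Measure Ω) (W ⁻¹' Iic t)) ^ n := by
    intro n hn t
    have hne : Nonempty (Fin n) := ⟨⟨0, hn⟩⟩
    have hset : {ω | Mn n ω ≤ t} = ⋂ i ∈ Finset.range n, Z i ⁻¹' Iic t := by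
      ext ω
      simp only [mem_setOf_eq, mem_iInter, Finset.mem_range, mem_preimage, mem_Iic]
      constructor
      · intro h i hi
        exact le_trans (le_ciSup (hbdd n ω) (⟨i, hi⟩ : Fin n)) h
      · intro h
        exact ciSup_le fun i => h i i.2
    rw [hset, hZindep.measure_inter_preimage_eq_mul (Finset.range n)
      (fun i _ => measurableSet_Iic)]
    rw [Finset.prod_congr rfl
      (fun i _ => (hZident i).measure_mem_eq measurableSet_Iic)]
    rw [Finset.prod_const, Finset.card_range]
  -- lower bound for the expectation
  have hlow : ∀ n : ℕ, 0 < n → ∀ t : ℝ, 0 ≤ t →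
      t * (1 - Real.exp (-((n : ℝ) * (ℙ {ω | W ω > t}).toReal))) ≤ ∫ ω, Mn n ω := by
    intro n hn t ht
    have hne : Nonempty (Fin n) := ⟨⟨0, hn⟩⟩
    set p : ℝ := (ℙ {ω | W ω > t}).toReal with hpdef
    have hp0 : 0 ≤ p := ENNReal.toReal_nonneg
    have hp1 : p ≤ 1 := ExpMaxAux.toReal_prob_le_one
    have hsetM : MeasurableSet {ω | Mn n ω > t} :=
      measurableSet_lt measurable_const (hMnmeas n)
    have hstep1 : t * (ℙ {ω | Mn n ω > t}).toReal ≤ ∫ ω, Mn n ω := by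
      have hindint : Integrable ({ω | Mn n ω > t}.indicator fun _ => t) ℙ :=
        (integrable_const t).indicator hsetM
      have hae : ∀ᵐ ω ∂(ℙ : Measure Ω),
          ({ω | Mn n ω > t}.indicator (fun _ => t)) ω ≤ Mn n ω := by
        filter_upwards [hZae 0] with ω hω0
        by_cases hmem : ω ∈ {ω | Mn n ω > t}
        · rw [Set.indicator_of_mem hmem]
          exact le_of_lt hmem
        · rw [Set.indicator_of_notMem hmem]
          exact le_trans hω0 (le_ciSup (hbdd n ω) (⟨0, hn⟩ : Fin n))
      have hmono := integral_mono_ae hindint (hMn_int n hn) hae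
      rw [integral_indicator_const _ hsetM, smul_eq_mul] at hmono
      rw [mul_comm]
      exact hmono
    have hcompl : {ω | Mn n ω > t} = {ω | Mn n ω ≤ t}ᶜ := by
      ext ω; simp [not_le]
    have hPMn : (ℙ {ω | Mn n ω > t}).toReal =
        1 - (((ℙ : Measure Ω) (W ⁻¹' Iic t)).toReal) ^ n := by
      rw [hcompl, measure_compl (measurableSet_le (hMnmeas n) measurable_const)
        (measure_ne_top _ _), measure_univ, hprod n hn t,
        ENNReal.toReal_sub_of_le (pow_le_one' prob_le_one n) ENNReal.one_ne_top,
        ENNReal.toReal_one, ENNReal.toReal_pow]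
    have hq : ((ℙ : Measure Ω) (W ⁻¹' Iic t)).toReal = 1 - p := by
      have hpre : W ⁻¹' Iic t = {ω | W ω > t}ᶜ := by
        ext ω; simp [not_lt]
      rw [hpre, measure_compl (measurableSet_lt measurable_const hWmeas)
        (measure_ne_top _ _), measure_univ,
        ENNReal.toReal_sub_of_le prob_le_one ENNReal.one_ne_top, ENNReal.toReal_one, hpdef]
    have hqexp : (1 - p) ^ n ≤ Real.exp (-((n : ℝ) * p)) := by
      have h1 : 1 - p ≤ Real.exp (-p) := by linarith [Real.add_one_le_exp (-p)]
      calc (1 - p) ^ n ≤ (Real.exp (-p)) ^ n := pow_le_pow_left₀ (by linarith) h1 n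
        _ = Real.exp (-((n : ℝ) * p)) := by
            rw [← Real.exp_nat_mul]; congr 1; ring
    calc t * (1 - Real.exp (-((n : ℝ) * p)))
        ≤ t * (1 - (1 - p) ^ n) := by
          apply mul_le_mul_of_nonneg_left _ ht
          linarith
      _ = t * (ℙ {ω | Mn n ω > t}).toReal := by rw [hPMn, hq]
      _ ≤ ∫ ω, Mn n ω := hstep1
  have hlogn : Tendsto (fun n : ℕ => Real.log n) atTop atTop :=
    Real.tendsto_log_atTop.comp tendsto_natCast_atTop_atTop
  -- the upper bound on the expectation, for a given s < lamS
  have key : ∀ s : ℝ, 0 < s → s < lamS → ∃ C : ℝ, ∀ n : ℕ, 1 ≤ n →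
      ∫ ω, Mn n ω ≤ Real.log n / s + C := by
    intro s hs hslt
    obtain ⟨M, hM, hMt⟩ := tailW s hs hslt
    set Is : ℝ := ∫ u in Ioi (0:ℝ), Real.exp (-s * u) with hIsdef
    have hIs0 : 0 ≤ Is := by
      apply integral_nonneg
      intro u
      exact (Real.exp_pos _).le
    refine ⟨M * Is, ?_⟩
    intro n hn
    have hn' : 0 < n := hn
    have hne : Nonempty (Fin n) := ⟨⟨0, hn'⟩⟩
    have hn0 : (0:ℝ) < (n:ℝ) := by exact_mod_cast hn'
    set t : ℝ := Real.log n / s with htdef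
    have ht : 0 ≤ t := div_nonneg (Real.log_nonneg (by exact_mod_cast hn)) hs.le
    have hpos_int : ∀ i : Fin n, Integrable (fun ω => max (Z (i : ℕ) ω - t) 0) ℙ :=
      fun i => ((hZint i).sub (integrable_const t)).pos_part
    have hpt : ∀ ω, Mn n ω ≤ t + ∑ i : Fin n, max (Z (i : ℕ) ω - t) 0 := by
      intro ω
      apply ciSup_le
      intro i
      have h1 : Z (i : ℕ) ω - t ≤ max (Z (i : ℕ) ω - t) 0 := le_max_left _ _
      have h2 : max (Z (i : ℕ) ω - t) 0 ≤ ∑ j : Fin n, max (Z (j : ℕ) ω - t) 0 :=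
        Finset.single_le_sum (f := fun j : Fin n => max (Z (j : ℕ) ω - t) 0)
          (fun j _ => le_max_right _ _) (Finset.mem_univ i)
      linarith
    have hRint : Integrable (fun ω => t + ∑ i : Fin n, max (Z (i : ℕ) ω - t) 0) ℙ :=
      (integrable_const t).add (integrable_finset_sum _ fun i _ => hpos_int i)
    have hInt := integral_mono (hMn_int n hn') hRint hpt
    rw [integral_add (integrable_const t) (integrable_finset_sum _ fun i _ => hpos_int i),
      integral_const, integral_finset_sum _ (fun i _ => hpos_int i)] at hInt
    simp only [measure_univ, probReal_univ, ENNReal.toReal_one, smul_eq_mul, one_mul] at hInt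
    have heq : ∀ i : Fin n,
        ∫ ω, max (Z (i : ℕ) ω - t) 0 ∂ℙ = ∫ ω, max (W ω - t) 0 ∂ℙ := by
      intro i
      have hu : Measurable (fun z : ℝ => max (z - t) 0) :=
        (measurable_id.sub measurable_const).max measurable_const
      exact ((hZident i).comp hu).integral_eq
    rw [Finset.sum_congr rfl (fun i _ => heq i), Finset.sum_const, Finset.card_univ,
      Fintype.card_fin, nsmul_eq_mul] at hInt
    have hP := ExpMaxAux.pos_part_bound W hWint s M hs hM hMt t
    have hexp : Real.exp (-s * t) = ((n : ℝ))⁻¹ := by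
      rw [htdef, show -s * (Real.log (n:ℝ) / s) = -Real.log (n:ℝ) by field_simp,
        Real.exp_neg, Real.exp_log hn0]
    rw [hexp] at hP
    have hfin : (n : ℝ) * ∫ ω, max (W ω - t) 0 ∂ℙ ≤ M * Is := by
      calc (n : ℝ) * ∫ ω, max (W ω - t) 0 ∂ℙ
          ≤ (n : ℝ) * (M * Is * ((n : ℝ))⁻¹) :=
            mul_le_mul_of_nonneg_left hP hn0.le
        _ = M * Is := by field_simp
    linarith
  -- now prove the limit via order topology
  refine tendsto_order.2 ⟨?_, ?_⟩
  · -- lower bound branch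
    intro b hb
    rcases lt_or_ge b 0 with hb0 | hb0
    · filter_upwards [eventually_ge_atTop 1, hlogn.eventually_gt_atTop 0] with n hn h2
      have h0 : (0:ℝ) ≤ ∫ ω, Mn n ω := by
        have := hlow n hn 0 le_rfl
        simpa using this
      calc b < 0 := hb0
        _ ≤ (∫ ω, Mn n ω) / Real.log n := div_nonneg h0 h2.le
    · obtain ⟨c', hc', B0, hB0⟩ := tailWlow
      set a : ℝ := (b + 1 / lamS) / 2 with hadef
      have hab : b < a := by
        rw [hadef]
        have : b < 1 / lamS := hb
        linarith
      have haL : a < 1 / lamS := by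
        rw [hadef]; linarith
      have ha0 : 0 < a := by
        have h1 : 0 < 1 / lamS := by positivity
        rw [hadef]; linarith
      have haS : 1 - lamS * a > 0 := by
        rw [lt_div_iff₀ hlamS0] at haL
        nlinarith
      set δ : ℝ := 1 - b / a with hδdef
      have hδ0 : 0 < δ := by
        rw [hδdef]
        have : b / a < 1 := (div_lt_one ha0).mpr hab
        linarith
      have T1 : Tendsto (fun n : ℕ => (1 - lamS * a) * Real.log n) atTop atTop :=
        Tendsto.const_mul_atTop haS hlogn
      have T3 : Tendsto (fun n : ℕ => c' * Real.exp ((1 - lamS * a) * Real.log n))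
          atTop atTop :=
        Tendsto.const_mul_atTop hc' (Real.tendsto_exp_atTop.comp T1)
      have T5 : Tendsto
          (fun n : ℕ => Real.exp (-(c' * Real.exp ((1 - lamS * a) * Real.log n))))
          atTop (𝓝 0) :=
        Real.tendsto_exp_atBot.comp (tendsto_neg_atTop_atBot.comp T3)
      filter_upwards [eventually_ge_atTop 1, hlogn.eventually_gt_atTop 0,
        (Tendsto.const_mul_atTop ha0 hlogn).eventually_ge_atTop B0,
        T5.eventually_lt_const hδ0] with n hn hlg hB hsm
      set t : ℝ := a * Real.log n with htdef
      have htpos : 0 < t := mul_pos ha0 hlg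
      have hn0 : (0:ℝ) < (n:ℝ) := by
        exact_mod_cast (Nat.one_le_iff_ne_zero.mp hn).bot_lt
      set p : ℝ := (ℙ {ω | W ω > t}).toReal with hpdef
      have hptail : c' * Real.exp (-lamS * t) ≤ p := hB0 t hB
      have hnp : c' * Real.exp ((1 - lamS * a) * Real.log n) ≤ (n : ℝ) * p := by
        have h1 : (n : ℝ) * (c' * Real.exp (-lamS * t)) ≤ (n : ℝ) * p :=
          mul_le_mul_of_nonneg_left hptail hn0.le
        have h2 : (n : ℝ) * (c' * Real.exp (-lamS * t)) =
            c' * Real.exp ((1 - lamS * a) * Real.log n) := by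
          calc (n : ℝ) * (c' * Real.exp (-lamS * t))
              = c' * (Real.exp (Real.log (n:ℝ)) *
                  Real.exp (-lamS * (a * Real.log (n:ℝ)))) := by
                rw [Real.exp_log hn0, htdef]; ring
            _ = c' * Real.exp (Real.log (n:ℝ) + -lamS * (a * Real.log (n:ℝ))) := by
                rw [Real.exp_add]
            _ = c' * Real.exp ((1 - lamS * a) * Real.log (n:ℝ)) := by
                congr 1
                ring
        linarith
      have hexp_le : Real.exp (-((n : ℝ) * p)) ≤
          Real.exp (-(c' * Real.exp ((1 - lamS * a) * Real.log n))) :=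
        Real.exp_le_exp.2 (by linarith)
      have hesmall : Real.exp (-((n : ℝ) * p)) < δ := lt_of_le_of_lt hexp_le hsm
      have hfrac : b / a < 1 - Real.exp (-((n : ℝ) * p)) := by
        rw [hδdef] at hesmall
        linarith
      have hmain := hlow n hn t htpos.le
      rw [lt_div_iff₀ hlg]
      calc b * Real.log n = (b / a) * t := by
            rw [htdef]; field_simp
        _ < (1 - Real.exp (-((n : ℝ) * p))) * t :=
            mul_lt_mul_of_pos_right hfrac htpos
        _ ≤ ∫ ω, Mn n ω := by
            rw [mul_comm]
            exact hmain
  · -- upper bound branch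
    intro b hb
    have hbpos : 0 < b := lt_trans (by positivity) hb
    have h1b : 1 / b < lamS := by
      have h' : 1 < b * lamS := (div_lt_iff₀ hlamS0).mp hb
      rw [div_lt_iff₀ hbpos]
      nlinarith
    obtain ⟨s, hs0, hss, hsb⟩ : ∃ s : ℝ, 0 < s ∧ s < lamS ∧ 1 / s < b := by
      refine ⟨(1 / b + lamS) / 2, ?_, by linarith, ?_⟩
      · have : 0 < 1 / b := by positivity
        linarith
      · have hs0' : 0 < (1 / b + lamS) / 2 := by
          have : 0 < 1 / b := by positivity
          linarith
        have h1 : 1 / b < (1 / b + lamS) / 2 := by linarith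
        rw [div_lt_iff₀ hbpos] at h1
        rw [div_lt_iff₀ hs0']
        nlinarith
    obtain ⟨C, hC⟩ := key s hs0 hss
    have Tdiv : Tendsto (fun n : ℕ => C / Real.log n) atTop (𝓝 0) := by
      have h := Tendsto.const_mul C hlogn.inv_tendsto_atTop
      rw [mul_zero] at h
      exact h.congr fun n => by rw [Pi.inv_apply, ← div_eq_mul_inv]
    filter_upwards [eventually_ge_atTop 1, hlogn.eventually_gt_atTop 0,
      Tdiv.eventually_lt_const (by linarith : (0:ℝ) < b - 1 / s)] with n hn hlg hsm
    calc (∫ ω, Mn n ω) / Real.log n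
        ≤ (Real.log n / s + C) / Real.log n :=
          (div_le_div_iff_of_pos_right hlg).2 (hC n hn)
      _ = 1 / s + C / Real.log n := by
          rw [add_div, div_div, mul_comm s (Real.log (n:ℝ)), ← div_div,
            div_self (ne_of_gt hlg)]
      _ < 1 / s + (b - 1 / s) := by linarith
      _ = b := by ring

end MainProof
end
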